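/- arXiv:0910.2317 — 13 statements merged into one kernel-verified Lean document; each statement's English description precedes it below -/
import Mathlib

section
/- Let D be a metric on a finite set X, let S = A|B be a split of X (a bipartition into nonempty sets A and B) satisfying D(a,b) + D(a',b') = D(a,b') + D(a',b) for all a,a' ∈ A and b,b' ∈ B. Then for any a ∈ A and b ∈ B, D(a|B) + D(b|A) − D(a,b) = α_S, where α_S := (1/2) · min over a',a'' ∈ A, b',b'' ∈ B of (max(D(a',b')+D(a'',b''), D(a',b'')+D(a'',b')) − D(a',a'') − D(b',b'')). In particular, D(a|B) + D(b|A) − D(a,b) does not depend on the choice of a ∈ A and b ∈ B. -/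
open Classical

variable {X : Type*}

/-- `D` is a metric on `X`. -/
def IsMetric (D : X → X → ℝ) : Prop :=
  (∀ x, D x x = 0) ∧ (∀ x y, D x y = D y x) ∧
  (∀ x y z, D x z ≤ D x y + D y z) ∧ (∀ x y, x ≠ y → 0 < D x y)

/-- `f ∈ P(D)`. -/
def memP (D : X → X → ℝ) (f : X → ℝ) : Prop := ∀ x y, D x y ≤ f x + f y

/-- The virtual distance `D(f|Y) = (1/2) min {f y + f y' - D y y' : y, y' ∈ Y}`. -/
noncomputable def vdist (D : X → X → ℝ) (f : X → ℝ) (Y : Set X) : ℝ :=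
  (1 / 2) * sInf {z | ∃ y ∈ Y, ∃ y' ∈ Y, z = f y + f y' - D y y'}

/-- `D(x|Y) := D(k_x|Y)` for the Kuratowski map `k_x`. -/
noncomputable def kdist (D : X → X → ℝ) (x : X) (Y : Set X) : ℝ :=
  vdist D (fun y => D x y) Y

/-- The isolation index `α_S` of the split `S = A|B`. -/
noncomputable def isoIdx (D : X → X → ℝ) (A B : Set X) : ℝ :=
  (1 / 2) * sInf {z | ∃ a ∈ A, ∃ a' ∈ A, ∃ b ∈ B, ∃ b' ∈ B,
      z = max (D a b + D a' b') (D a b' + D a' b) - D a a' - D b b'}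

/-- Adjacency in the graph `Γ_f`: vertices are points of the support of `f`,
and `x y` are joined iff `f x + f y > D x y`. -/
def adj (D : X → X → ℝ) (f : X → ℝ) (x y : X) : Prop :=
  x ≠ y ∧ f x ≠ 0 ∧ f y ≠ 0 ∧ D x y < f x + f y

/-- The graph `Γ_f` (on vertex set `supp f`) is disconnected. -/
def Disconn (D : X → X → ℝ) (f : X → ℝ) : Prop :=
  ∃ U V : Set X, U.Nonempty ∧ V.Nonempty ∧ Disjoint U V ∧
    U ∪ V = {x | f x ≠ 0} ∧ ∀ u ∈ U, ∀ v ∈ V, ¬ adj D f u v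

/-- `Γ_f` is the disjoint union of two cliques with vertex sets `A` and `B`. -/
def DisjUnionTwoCliques (D : X → X → ℝ) (f : X → ℝ) (A B : Set X) : Prop :=
  A.Nonempty ∧ B.Nonempty ∧ Disjoint A B ∧ A ∪ B = {x | f x ≠ 0} ∧
  (∀ a ∈ A, ∀ a' ∈ A, a ≠ a' → adj D f a a') ∧
  (∀ b ∈ B, ∀ b' ∈ B, b ≠ b' → adj D f b b') ∧
  (∀ a ∈ A, ∀ b ∈ B, ¬ adj D f a b)

/-- `A|B` is a block split of `X` relative to `D`. -/
def IsBlockSplit (D : X → X → ℝ) (A B : Set X) : Prop :=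
  ∃ f : X → ℝ, memP D f ∧ (∀ x, f x ≠ 0) ∧ DisjUnionTwoCliques D f A B

/-- `f` lies in the tight span `T(D)`:  `f x = max_y (D x y - f y)` for all `x`. -/
def memT (D : X → X → ℝ) (f : X → ℝ) : Prop :=
  ∀ x, IsGreatest (Set.range fun y => D x y - f y) (f x)

/-- The endpoint map `f_A = f_{A→α_S, B→0}` of the segment associated with a block split. -/
noncomputable def endpointA (D : X → X → ℝ) (A B : Set X) : X → ℝ :=
  fun x => if x ∈ A then kdist D x B - isoIdx D A B else kdist D x A

/-- The endpoint map `f_B = f_{A→0, B→α_S}` of the segment associated with a block split. -/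
noncomputable def endpointB (D : X → X → ℝ) (A B : Set X) : X → ℝ :=
  fun x => if x ∈ A then kdist D x B else kdist D x A - isoIdx D A B

/-- `A|B` is a split (bipartition into nonempty parts) of `X`. -/
def IsSplit (A B : Set X) : Prop :=
  A.Nonempty ∧ B.Nonempty ∧ Disjoint A B ∧ A ∪ B = Set.univ

theorem stmt1 [Fintype X] (D : X → X → ℝ) (hD : IsMetric D) (A B : Set X)
    (hS : IsSplit A B)
    (h4 : ∀ a ∈ A, ∀ a' ∈ A, ∀ b ∈ B, ∀ b' ∈ B, D a b + D a' b' = D a b' + D a' b) :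
    ∀ a ∈ A, ∀ b ∈ B, kdist D a B + kdist D b A - D a b = isoIdx D A B := by
  obtain ⟨hzero, hsymm, htri, hpos⟩ := hD
  intro a ha b hb
  set S1 : Set ℝ := {z | ∃ y ∈ B, ∃ y' ∈ B, z = D a y + D a y' - D y y'} with hS1
  set S2 : Set ℝ := {z | ∃ y ∈ A, ∃ y' ∈ A, z = D b y + D b y' - D y y'} with hS2
  set T : Set ℝ := {z | ∃ a' ∈ A, ∃ a'' ∈ A, ∃ b' ∈ B, ∃ b'' ∈ B,
      z = max (D a' b' + D a'' b'') (D a' b'' + D a'' b') - D a' a'' - D b' b''} with hT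
  have hfin1 : S1.Finite := by
    apply (Set.finite_range (fun p : X × X => D a p.1 + D a p.2 - D p.1 p.2)).subset
    rintro z ⟨y, _, y', _, rfl⟩; exact ⟨(y, y'), rfl⟩
  have hfin2 : S2.Finite := by
    apply (Set.finite_range (fun p : X × X => D b p.1 + D b p.2 - D p.1 p.2)).subset
    rintro z ⟨y, _, y', _, rfl⟩; exact ⟨(y, y'), rfl⟩
  have hfinT : T.Finite := by
    apply (Set.finite_range (fun p : (X × X) × X × X =>
      max (D p.1.1 p.2.1 + D p.1.2 p.2.2) (D p.1.1 p.2.2 + D p.1.2 p.2.1)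
        - D p.1.1 p.1.2 - D p.2.1 p.2.2)).subset
    rintro z ⟨a', _, a'', _, b', _, b'', _, rfl⟩; exact ⟨((a', a''), (b', b'')), rfl⟩
  have hne1 : S1.Nonempty := ⟨_, b, hb, b, hb, rfl⟩
  have hne2 : S2.Nonempty := ⟨_, a, ha, a, ha, rfl⟩
  have hneT : T.Nonempty := ⟨_, a, ha, a, ha, b, hb, b, hb, rfl⟩
  -- key identity
  have key : ∀ a' ∈ A, ∀ a'' ∈ A, ∀ b' ∈ B, ∀ b'' ∈ B,
      max (D a' b' + D a'' b'') (D a' b'' + D a'' b') - D a' a'' - D b' b''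
        = (D a b' + D a b'' - D b' b'') + (D b a' + D b a'' - D a' a'') - 2 * D a b := by
    intro a' ha' a'' ha'' b' hb' b'' hb''
    have e : D a' b' + D a'' b'' = D a' b'' + D a'' b' := h4 a' ha' a'' ha'' b' hb' b'' hb''
    have hmax : max (D a' b' + D a'' b'') (D a' b'' + D a'' b') = D a' b' + D a'' b'' :=
      max_eq_left (le_of_eq e.symm)
    have e1 : D a b + D a' b' = D a b' + D a' b := h4 a ha a' ha' b hb b' hb'
    have e2 : D a b + D a'' b'' = D a b'' + D a'' b := h4 a ha a'' ha'' b hb b'' hb''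
    have s1 : D b a' = D a' b := hsymm b a'
    have s2 : D b a'' = D a'' b := hsymm b a''
    rw [hmax]; linarith
  have hmem1 : sInf S1 ∈ S1 := hne1.csInf_mem hfin1
  have hmem2 : sInf S2 ∈ S2 := hne2.csInf_mem hfin2
  have hTval : sInf T = sInf S1 + sInf S2 - 2 * D a b := by
    apply le_antisymm
    · obtain ⟨b', hb', b'', hb'', h1⟩ := hmem1
      obtain ⟨a', ha', a'', ha'', h2⟩ := hmem2
      have : max (D a' b' + D a'' b'') (D a' b'' + D a'' b') - D a' a'' - D b' b'' ∈ T :=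
        ⟨a', ha', a'', ha'', b', hb', b'', hb'', rfl⟩
      have hle := csInf_le hfinT.bddBelow this
      rw [key a' ha' a'' ha'' b' hb' b'' hb''] at hle
      linarith
    · apply le_csInf hneT
      rintro z ⟨a', ha', a'', ha'', b', hb', b'', hb'', rfl⟩
      rw [key a' ha' a'' ha'' b' hb' b'' hb'']
      have h1 : sInf S1 ≤ D a b' + D a b'' - D b' b'' :=
        csInf_le hfin1.bddBelow ⟨b', hb', b'', hb'', rfl⟩
      have h2 : sInf S2 ≤ D b a' + D b a'' - D a' a'' :=
        csInf_le hfin2.bddBelow ⟨a', ha', a'', ha'', rfl⟩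
      linarith
  have e1 : kdist D a B = (1 / 2) * sInf S1 := rfl
  have e2 : kdist D b A = (1 / 2) * sInf S2 := rfl
  have e3 : isoIdx D A B = (1 / 2) * sInf T := rfl
  rw [e1, e2, e3, hTval]; ring
end

section
/- Let D be a metric on a finite set X and S = A|B a split of X. Then S is a block split of X relative to D if and only if the isolation index α_S is positive and, for arbitrarily chosen fixed elements a₀ ∈ A and b₀ ∈ B, the identity D(a₀,b₀) + D(a',b') = D(a₀,b') + D(a',b₀) holds for all a' ∈ A and b' ∈ B. -/
open Classical

variable {X : Type*}

theorem stmt2 [Fintype X] (D : X → X → ℝ) (hD : IsMetric D) (A B : Set X)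
    (hS : IsSplit A B) :
    IsBlockSplit D A B ↔
      (0 < isoIdx D A B ∧ ∀ a₀ ∈ A, ∀ b₀ ∈ B, ∀ a' ∈ A, ∀ b' ∈ B,
        D a₀ b₀ + D a' b' = D a₀ b' + D a' b₀) := by
  obtain ⟨hAne, hBne, hdisj, hcover⟩ := hS
  obtain ⟨hzero, hsymm, htri, hposD⟩ := hD
  have hAB : ∀ x, x ∈ A ∨ x ∈ B := fun x => by
    have : x ∈ A ∪ B := by rw [hcover]; trivial
    exact this
  have hnotA : ∀ x ∈ B, x ∉ A := fun x hx => Set.disjoint_right.mp hdisj hx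
  -- The set defining the isolation index
  set Z : Set ℝ := {z | ∃ a ∈ A, ∃ a' ∈ A, ∃ b ∈ B, ∃ b' ∈ B,
      z = max (D a b + D a' b') (D a b' + D a' b) - D a a' - D b b'} with hZ
  have hZfin : Z.Finite := by
    apply Set.Finite.subset (Set.finite_range
      (fun p : (X × X) × (X × X) =>
        max (D p.1.1 p.2.1 + D p.1.2 p.2.2) (D p.1.1 p.2.2 + D p.1.2 p.2.1)
          - D p.1.1 p.1.2 - D p.2.1 p.2.2))
    rintro z ⟨a, _, a', _, b, _, b', _, rfl⟩
    exact ⟨((a, a'), (b, b')), rfl⟩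
  have hZne : Z.Nonempty := by
    obtain ⟨a, ha⟩ := hAne; obtain ⟨b, hb⟩ := hBne
    exact ⟨_, a, ha, a, ha, b, hb, b, hb, rfl⟩
  have hαeq : isoIdx D A B = (1 / 2) * sInf Z := rfl
  constructor
  · rintro ⟨f, hf, hfne, -, -, -, -, hcliqA, hcliqB, hnoAB⟩
    have hfpos : ∀ x, 0 < f x := by
      intro x
      have h0 := hf x x
      rw [hzero] at h0
      exact lt_of_le_of_ne (by linarith) (Ne.symm (hfne x))
    have key : ∀ a ∈ A, ∀ b ∈ B, D a b = f a + f b := by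
      intro a ha b hb
      have hne : a ≠ b := fun h => Set.disjoint_left.mp hdisj ha (h ▸ hb)
      have hn := hnoAB a ha b hb
      simp only [adj, not_and, not_lt] at hn
      exact le_antisymm (hf a b) (hn hne (hfne a) (hfne b))
    have hcA : ∀ a ∈ A, ∀ a' ∈ A, D a a' < f a + f a' := by
      intro a ha a' ha'
      by_cases h : a = a'
      · subst h; rw [hzero]; linarith [hfpos a]
      · exact (hcliqA a ha a' ha' h).2.2.2
    have hcB : ∀ b ∈ B, ∀ b' ∈ B, D b b' < f b + f b' := by
      intro b hb b' hb'
      by_cases h : b = b'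
      · subst h; rw [hzero]; linarith [hfpos b]
      · exact (hcliqB b hb b' hb' h).2.2.2
    refine ⟨?_, ?_⟩
    · have hZpos : ∀ z ∈ Z, 0 < z := by
        rintro z ⟨a, ha, a', ha', b, hb, b', hb', rfl⟩
        have h1 : D a b + D a' b' = f a + f b + (f a' + f b') := by
          rw [key a ha b hb, key a' ha' b' hb']
        have h2 : D a b' + D a' b = f a + f b' + (f a' + f b) := by
          rw [key a ha b' hb', key a' ha' b hb]
        have hmax : max (D a b + D a' b') (D a b' + D a' b) = f a + f a' + f b + f b' := by
          rw [h1, h2]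
          rw [show f a + f b + (f a' + f b') = f a + f a' + f b + f b' by ring,
            show f a + f b' + (f a' + f b) = f a + f a' + f b + f b' by ring, max_self]
        rw [hmax]
        have := hcA a ha a' ha'
        have := hcB b hb b' hb'
        linarith
      have := hZpos _ (hZne.csInf_mem hZfin)
      rw [hαeq]; linarith
    · intro a₀ ha₀ b₀ hb₀ a' ha' b' hb'
      rw [key a₀ ha₀ b₀ hb₀, key a' ha' b' hb', key a₀ ha₀ b' hb', key a' ha' b₀ hb₀]
      ring
  · rintro ⟨hα, hrect⟩
    obtain ⟨a₀, ha₀⟩ := hAne; obtain ⟨b₀, hb₀⟩ := hBne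
    set α := isoIdx D A B with hα'
    have hrect' : ∀ a ∈ A, ∀ b ∈ B, D a b = D a b₀ + D a₀ b - D a₀ b₀ := by
      intro a ha b hb
      have := hrect a₀ ha₀ b₀ hb₀ a ha b hb
      linarith
    set SA : Set ℝ := {z | ∃ a ∈ A, ∃ a' ∈ A, z = D a b₀ + D a' b₀ - D a a'} with hSA
    set SB : Set ℝ := {z | ∃ b ∈ B, ∃ b' ∈ B, z = D a₀ b + D a₀ b' - D b b'} with hSB
    have hSAfin : SA.Finite := by
      apply Set.Finite.subset (Set.finite_range
        (fun p : X × X => D p.1 b₀ + D p.2 b₀ - D p.1 p.2))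
      rintro z ⟨a, _, a', _, rfl⟩; exact ⟨(a, a'), rfl⟩
    have hSBfin : SB.Finite := by
      apply Set.Finite.subset (Set.finite_range
        (fun p : X × X => D a₀ p.1 + D a₀ p.2 - D p.1 p.2))
      rintro z ⟨b, _, b', _, rfl⟩; exact ⟨(b, b'), rfl⟩
    have hSAne : SA.Nonempty := ⟨_, a₀, ha₀, a₀, ha₀, rfl⟩
    have hSBne : SB.Nonempty := ⟨_, b₀, hb₀, b₀, hb₀, rfl⟩
    set mA := sInf SA with hmA
    set mB := sInf SB with hmB
    have hmAle : ∀ a ∈ A, ∀ a' ∈ A, mA ≤ D a b₀ + D a' b₀ - D a a' := by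
      intro a ha a' ha'
      exact csInf_le hSAfin.bddBelow ⟨a, ha, a', ha', rfl⟩
    have hmBle : ∀ b ∈ B, ∀ b' ∈ B, mB ≤ D a₀ b + D a₀ b' - D b b' := by
      intro b hb b' hb'
      exact csInf_le hSBfin.bddBelow ⟨b, hb, b', hb', rfl⟩
    -- key inequality: mA + mB - 2 D a₀ b₀ ≥ 2 α
    have hkey : 2 * α ≤ mA + mB - 2 * D a₀ b₀ := by
      obtain ⟨a, ha, a', ha', hAeq⟩ := hSAne.csInf_mem hSAfin
      obtain ⟨b, hb, b', hb', hBeq⟩ := hSBne.csInf_mem hSBfin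
      have hz : (max (D a b + D a' b') (D a b' + D a' b) - D a a' - D b b') ∈ Z :=
        ⟨a, ha, a', ha', b, hb, b', hb', rfl⟩
      have hle : sInf Z ≤ max (D a b + D a' b') (D a b' + D a' b) - D a a' - D b b' :=
        csInf_le hZfin.bddBelow hz
      have e1 := hrect' a ha b hb
      have e2 := hrect' a ha b' hb'
      have e3 := hrect' a' ha' b hb
      have e4 := hrect' a' ha' b' hb'
      have hmaxeq : max (D a b + D a' b') (D a b' + D a' b)
          = D a b₀ + D a' b₀ + D a₀ b + D a₀ b' - 2 * D a₀ b₀ := by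
        rw [show D a b + D a' b' = D a b₀ + D a' b₀ + D a₀ b + D a₀ b' - 2 * D a₀ b₀ by
            linarith,
          show D a b' + D a' b = D a b₀ + D a' b₀ + D a₀ b + D a₀ b' - 2 * D a₀ b₀ by
            linarith, max_self]
      rw [hmaxeq] at hle
      rw [hαeq, hmA, hmB]
      linarith [hle, hAeq, hBeq]
    -- the witness function
    set c : ℝ := (mA - α) / 2 with hc
    set f : X → ℝ := fun x => if x ∈ A then D x b₀ - c else D a₀ x - (D a₀ b₀ - c) with hfdef
    have hfa : ∀ a ∈ A, f a = D a b₀ - c := fun a ha => by simp [hfdef, ha]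
    have hfb : ∀ b ∈ B, f b = D a₀ b - (D a₀ b₀ - c) := fun b hb => by
      simp [hfdef, hnotA b hb]
    have hAA : ∀ a ∈ A, ∀ a' ∈ A, D a a' + α ≤ f a + f a' := by
      intro a ha a' ha'
      rw [hfa a ha, hfa a' ha']
      have := hmAle a ha a' ha'
      rw [hc]; linarith
    have hBB : ∀ b ∈ B, ∀ b' ∈ B, D b b' + α ≤ f b + f b' := by
      intro b hb b' hb'
      rw [hfb b hb, hfb b' hb']
      have := hmBle b hb b' hb'
      rw [hc]; linarith
    have hABeq : ∀ a ∈ A, ∀ b ∈ B, f a + f b = D a b := by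
      intro a ha b hb
      rw [hfa a ha, hfb b hb, hrect' a ha b hb]; ring
    have hfpos : ∀ x, 0 < f x := by
      intro x
      rcases hAB x with hx | hx
      · have := hAA x hx x hx; rw [hzero] at this; linarith
      · have := hBB x hx x hx; rw [hzero] at this; linarith
    have hfne : ∀ x, f x ≠ 0 := fun x => ne_of_gt (hfpos x)
    refine ⟨f, ?_, hfne, ⟨a₀, ha₀⟩, ⟨b₀, hb₀⟩, hdisj, ?_, ?_, ?_, ?_⟩
    · -- memP
      intro x y
      rcases hAB x with hx | hx <;> rcases hAB y with hy | hy
      · linarith [hAA x hx y hy]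
      · exact le_of_eq (hABeq x hx y hy).symm
      · rw [hsymm x y]; linarith [(hABeq y hy x hx)]
      · linarith [hBB x hx y hy]
    · -- support
      ext x; simp [hfne x, hAB x]
    · -- clique A
      intro a ha a' ha' hne
      exact ⟨hne, hfne a, hfne a', by linarith [hAA a ha a' ha']⟩
    · -- clique B
      intro b hb b' hb' hne
      exact ⟨hne, hfne b, hfne b', by linarith [hBB b hb b' hb']⟩
    · -- no edges A-B
      intro a ha b hb h
      have := h.2.2.2
      rw [hABeq a ha b hb] at this
      exact lt_irrefl _ this
end

section
/- Let D be a metric on a finite set X and S = A|B a block split of X. If f ∈ P(D) satisfies f(a) + f(b) = D(a,b) for all a ∈ A and b ∈ B, then there exist γ_A, γ_B ≥ 0 with γ_A + γ_B = α_S such that f(a) = D(a|B) − γ_A for all a ∈ A and f(b) = D(b|A) − γ_B for all b ∈ B. Consequently, the set T(D|S) := {f ∈ P(D) : every edge of Γ_f lies within A or within B} is a line segment in ℝ^X parametrized by {(γ_A,γ_B) ∈ ℝ²_{≥0} : γ_A + γ_B = α_S}. -/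
open Classical

variable {X : Type*}

section Aux

variable [Fintype X]

lemma vdist_pair (D : X → X → ℝ) (f : X → ℝ) {Y : Set X} (hY : Y.Nonempty) :
    (∃ y ∈ Y, ∃ y' ∈ Y, 2 * vdist D f Y = f y + f y' - D y y') ∧
    (∀ y ∈ Y, ∀ y' ∈ Y, 2 * vdist D f Y ≤ f y + f y' - D y y') := by
  obtain ⟨y0, hy0⟩ := hY
  have hfin : {z | ∃ y ∈ Y, ∃ y' ∈ Y, z = f y + f y' - D y y'}.Finite := by
    apply Set.Finite.subset (Set.finite_range fun p : X × X => f p.1 + f p.2 - D p.1 p.2)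
    rintro z ⟨y, _, y', _, rfl⟩
    exact ⟨(y, y'), rfl⟩
  have hne : {z | ∃ y ∈ Y, ∃ y' ∈ Y, z = f y + f y' - D y y'}.Nonempty :=
    ⟨f y0 + f y0 - D y0 y0, y0, hy0, y0, hy0, rfl⟩
  have h2 : 2 * vdist D f Y = sInf {z | ∃ y ∈ Y, ∃ y' ∈ Y, z = f y + f y' - D y y'} := by
    unfold vdist; ring
  constructor
  · obtain ⟨y, hy, y', hy', hz⟩ := hne.csInf_mem hfin
    exact ⟨y, hy, y', hy', by rw [h2, hz]⟩
  · intro y hy y' hy'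
    rw [h2]
    exact csInf_le hfin.bddBelow ⟨y, hy, y', hy', rfl⟩

lemma iso_pair (D : X → X → ℝ) {A B : Set X} (hA : A.Nonempty) (hB : B.Nonempty) :
    (∃ a ∈ A, ∃ a' ∈ A, ∃ b ∈ B, ∃ b' ∈ B, 2 * isoIdx D A B =
      max (D a b + D a' b') (D a b' + D a' b) - D a a' - D b b') ∧
    (∀ a ∈ A, ∀ a' ∈ A, ∀ b ∈ B, ∀ b' ∈ B, 2 * isoIdx D A B ≤
      max (D a b + D a' b') (D a b' + D a' b) - D a a' - D b b') := by
  obtain ⟨a0, ha0⟩ := hA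
  obtain ⟨b0, hb0⟩ := hB
  set S := {z | ∃ a ∈ A, ∃ a' ∈ A, ∃ b ∈ B, ∃ b' ∈ B,
      z = max (D a b + D a' b') (D a b' + D a' b) - D a a' - D b b'} with hS
  have hfin : S.Finite := by
    apply Set.Finite.subset (Set.finite_range fun p : (X × X) × X × X =>
      max (D p.1.1 p.2.1 + D p.1.2 p.2.2) (D p.1.1 p.2.2 + D p.1.2 p.2.1)
        - D p.1.1 p.1.2 - D p.2.1 p.2.2)
    rintro z ⟨a, _, a', _, b, _, b', _, rfl⟩
    exact ⟨((a, a'), b, b'), rfl⟩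
  have hne : S.Nonempty :=
    ⟨_, a0, ha0, a0, ha0, b0, hb0, b0, hb0, rfl⟩
  have h2 : 2 * isoIdx D A B = sInf S := by
    rw [hS]; unfold isoIdx; ring
  constructor
  · obtain ⟨a, ha, a', ha', b, hb, b', hb', hz⟩ := hne.csInf_mem hfin
    exact ⟨a, ha, a', ha', b, hb, b', hb', by rw [h2, hz]⟩
  · intro a ha a' ha' b hb b' hb'
    rw [h2]
    exact csInf_le hfin.bddBelow ⟨a, ha, a', ha', b, hb, b', hb', rfl⟩

lemma kdist_eq (D : X → X → ℝ) (f : X → ℝ) (x : X) {Y : Set X} (hY : Y.Nonempty)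
    (h : ∀ y ∈ Y, D x y = f x + f y) : kdist D x Y = f x + vdist D f Y := by
  obtain ⟨⟨b, hb, b', hb', h1⟩, h1'⟩ := vdist_pair D f hY
  obtain ⟨⟨c, hc, c', hc', h2⟩, h2'⟩ := vdist_pair D (fun y => D x y) hY
  have h3 := h1' c hc c' hc'
  have h4 := h2' b hb b' hb'
  have e1 := h b hb
  have e2 := h b' hb'
  have e3 := h c hc
  have e4 := h c' hc'
  have : 2 * kdist D x Y = 2 * (f x + vdist D f Y) := by
    unfold kdist
    linarith
  linarith

lemma iso_eq (D : X → X → ℝ) (f : X → ℝ) {A B : Set X} (hA : A.Nonempty) (hB : B.Nonempty)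
    (hfe : ∀ a ∈ A, ∀ b ∈ B, f a + f b = D a b) :
    isoIdx D A B = vdist D f A + vdist D f B := by
  obtain ⟨⟨a1, ha1, a2, ha2, hva⟩, hva'⟩ := vdist_pair D f hA
  obtain ⟨⟨b1, hb1, b2, hb2, hvb⟩, hvb'⟩ := vdist_pair D f hB
  obtain ⟨⟨a, ha, a', ha', b, hb, b', hb', hi⟩, hi'⟩ := iso_pair D hA hB
  have key : ∀ p ∈ A, ∀ p' ∈ A, ∀ q ∈ B, ∀ q' ∈ B,
      max (D p q + D p' q') (D p q' + D p' q) - D p p' - D q q'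
        = (f p + f p' - D p p') + (f q + f q' - D q q') := by
    intro p hp p' hp' q hq q' hq'
    have e1 := hfe p hp q hq
    have e2 := hfe p' hp' q' hq'
    have e3 := hfe p hp q' hq'
    have e4 := hfe p' hp' q hq
    have m1 : D p q + D p' q' = f p + f p' + f q + f q' := by linarith
    have m2 : D p q' + D p' q = f p + f p' + f q + f q' := by linarith
    rw [m1, m2, max_self]
    ring
  have hle : 2 * isoIdx D A B ≤ 2 * (vdist D f A + vdist D f B) := by
    have := hi' a1 ha1 a2 ha2 b1 hb1 b2 hb2
    rw [key a1 ha1 a2 ha2 b1 hb1 b2 hb2] at this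
    linarith
  have hge : 2 * (vdist D f A + vdist D f B) ≤ 2 * isoIdx D A B := by
    rw [hi, key a ha a' ha' b hb b' hb']
    have := hva' a ha a' ha'
    have := hvb' b hb b' hb'
    linarith
  linarith

lemma vdist_nonneg (D : X → X → ℝ) (f : X → ℝ) {Y : Set X} (hY : Y.Nonempty)
    (hf : memP D f) : 0 ≤ vdist D f Y := by
  obtain ⟨⟨y, hy, y', hy', h1⟩, _⟩ := vdist_pair D f hY
  have := hf y y'
  linarith

lemma part1 (D : X → X → ℝ) (hD : IsMetric D) {A B : Set X} (hA : A.Nonempty) (hB : B.Nonempty)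
    (f : X → ℝ) (hf : memP D f) (hfe : ∀ a ∈ A, ∀ b ∈ B, f a + f b = D a b) :
    ∃ γA γB : ℝ, 0 ≤ γA ∧ 0 ≤ γB ∧ γA + γB = isoIdx D A B ∧
      (∀ a ∈ A, f a = kdist D a B - γA) ∧ (∀ b ∈ B, f b = kdist D b A - γB) := by
  refine ⟨vdist D f B, vdist D f A, vdist_nonneg D f hB hf, vdist_nonneg D f hA hf, ?_, ?_, ?_⟩
  · rw [iso_eq D f hA hB hfe]; ring
  · intro a ha
    rw [kdist_eq D f a hB (fun b hb => (hfe a ha b hb).symm)]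
    ring
  · intro b hb
    rw [kdist_eq D f b hA (fun a ha => by rw [hD.2.1 b a, ← hfe a ha b hb]; ring)]
    ring

end Aux

theorem stmt4 [Fintype X] (D : X → X → ℝ) (hD : IsMetric D) (A B : Set X)
    (hBS : IsBlockSplit D A B) (f : X → ℝ) (hf : memP D f)
    (hfe : ∀ a ∈ A, ∀ b ∈ B, f a + f b = D a b) :
    (∃ γA γB : ℝ, 0 ≤ γA ∧ 0 ≤ γB ∧ γA + γB = isoIdx D A B ∧
      (∀ a ∈ A, f a = kdist D a B - γA) ∧ (∀ b ∈ B, f b = kdist D b A - γB)) ∧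
    ({g : X → ℝ | memP D g ∧ ∀ x y : X, x ≠ y → D x y < g x + g y →
        (x ∈ A ∧ y ∈ A) ∨ (x ∈ B ∧ y ∈ B)} =
      {g : X → ℝ | ∃ γA γB : ℝ, 0 ≤ γA ∧ 0 ≤ γB ∧ γA + γB = isoIdx D A B ∧
        (∀ a ∈ A, g a = kdist D a B - γA) ∧ (∀ b ∈ B, g b = kdist D b A - γB)}) := by
  obtain ⟨f0, hf0P, hf0ne, hA, hB, hdisj, hcover, _, _, hnoadj⟩ := hBS
  have hAB : ∀ x : X, x ∈ A ∨ x ∈ B := by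
    intro x
    have : x ∈ A ∪ B := by rw [hcover]; exact hf0ne x
    exact this
  have hneq : ∀ a ∈ A, ∀ b ∈ B, a ≠ b := by
    intro a ha b hb h
    exact (Set.disjoint_left.mp hdisj ha) (h ▸ hb)
  have hfe0 : ∀ a ∈ A, ∀ b ∈ B, f0 a + f0 b = D a b := by
    intro a ha b hb
    have hle := hf0P a b
    have hna := hnoadj a ha b hb
    have : ¬ (D a b < f0 a + f0 b) := by
      intro hlt
      exact hna ⟨hneq a ha b hb, hf0ne a, hf0ne b, hlt⟩
    linarith [not_lt.mp this]
  have hkA : ∀ a ∈ A, kdist D a B = f0 a + vdist D f0 B := fun a ha =>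
    kdist_eq D f0 a hB (fun b hb => (hfe0 a ha b hb).symm)
  have hkB : ∀ b ∈ B, kdist D b A = f0 b + vdist D f0 A := fun b hb =>
    kdist_eq D f0 b hA (fun a ha => by rw [hD.2.1 b a, ← hfe0 a ha b hb]; ring)
  have hiso : isoIdx D A B = vdist D f0 A + vdist D f0 B := iso_eq D f0 hA hB hfe0
  obtain ⟨_, hvA'⟩ := vdist_pair D f0 hA
  obtain ⟨_, hvB'⟩ := vdist_pair D f0 hB
  have fact1 : ∀ a ∈ A, ∀ b ∈ B, kdist D a B + kdist D b A - isoIdx D A B = D a b := by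
    intro a ha b hb
    rw [hkA a ha, hkB b hb, hiso, ← hfe0 a ha b hb]; ring
  have fact2 : ∀ a ∈ A, ∀ a' ∈ A, D a a' + 2 * isoIdx D A B ≤ kdist D a B + kdist D a' B := by
    intro a ha a' ha'
    have := hvA' a ha a' ha'
    rw [hkA a ha, hkA a' ha', hiso]
    linarith
  have fact3 : ∀ b ∈ B, ∀ b' ∈ B, D b b' + 2 * isoIdx D A B ≤ kdist D b A + kdist D b' A := by
    intro b hb b' hb'
    have := hvB' b hb b' hb'
    rw [hkB b hb, hkB b' hb', hiso]
    linarith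
  constructor
  · exact part1 D hD hA hB f hf hfe
  · ext g
    simp only [Set.mem_setOf_eq]
    constructor
    · rintro ⟨hgP, hedge⟩
      apply part1 D hD hA hB g hgP
      intro a ha b hb
      have hle := hgP a b
      have : ¬ (D a b < g a + g b) := by
        intro hlt
        rcases hedge a b (hneq a ha b hb) hlt with ⟨_, hbA⟩ | ⟨haB, _⟩
        · exact (Set.disjoint_left.mp hdisj hbA) hb
        · exact (Set.disjoint_left.mp hdisj ha) haB
      linarith [not_lt.mp this]
    · rintro ⟨γA, γB, hγA, hγB, hsum, hgA, hgB⟩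
      have hγAle : γA ≤ isoIdx D A B := by linarith
      have hγBle : γB ≤ isoIdx D A B := by linarith
      have cross : ∀ a ∈ A, ∀ b ∈ B, g a + g b = D a b := by
        intro a ha b hb
        rw [hgA a ha, hgB b hb, ← fact1 a ha b hb]
        linarith
      have hgP : memP D g := by
        intro x y
        rcases hAB x with hx | hx <;> rcases hAB y with hy | hy
        · rw [hgA x hx, hgA y hy]
          have := fact2 x hx y hy
          linarith
        · rw [cross x hx y hy]
        · rw [hD.2.1 x y]
          have := cross y hy x hx
          linarith
        · rw [hgB x hx, hgB y hy]
          have := fact3 x hx y hy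
          linarith
      refine ⟨hgP, ?_⟩
      intro x y hxy hlt
      rcases hAB x with hx | hx <;> rcases hAB y with hy | hy
      · exact Or.inl ⟨hx, hy⟩
      · rw [cross x hx y hy] at hlt
        exact absurd hlt (lt_irrefl _)
      · rw [hD.2.1 x y] at hlt
        have := cross y hy x hx
        linarith
      · exact Or.inr ⟨hx, hy⟩
end

section
/- Let D be a metric on a finite set X, x ∈ X, X' := X \ {x}, and D' the restriction of D to X'. If S = A|B is a block split of X relative to D, then either S = {x}|X' or the restriction (A ∩ X')|(B ∩ X') of S to X' is a block split of X' relative to D'. -/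
open Classical

variable {X : Type*}

theorem stmt5 [Fintype X] (D : X → X → ℝ) (hD : IsMetric D) (x : X)
    (A B : Set X) (hBS : IsBlockSplit D A B) :
    (A = {x} ∨ B = {x}) ∨
      IsBlockSplit (fun u v : {y : X // y ≠ x} => D u.1 v.1)
        {u : {y : X // y ≠ x} | u.1 ∈ A} {u : {y : X // y ≠ x} | u.1 ∈ B} := by
  obtain ⟨f, hfP, hf0, hA, hB, hdisj, hun, hAcl, hBcl, hAB⟩ := hBS
  by_cases hAx : A = {x}
  · exact Or.inl (Or.inl hAx)
  by_cases hBx : B = {x}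
  · exact Or.inl (Or.inr hBx)
  right
  have key : ∀ (S : Set X), S.Nonempty → S ≠ {x} → ∃ a ∈ S, a ≠ x := by
    intro S hS hne
    by_contra h
    push_neg at h
    exact hne (Set.eq_singleton_iff_nonempty_unique_mem.mpr ⟨hS, h⟩)
  have hadj : ∀ u v : {y : X // y ≠ x},
      adj (fun u v : {y : X // y ≠ x} => D u.1 v.1) (fun u => f u.1) u v ↔ adj D f u.1 v.1 := by
    intro u v
    simp [adj, Subtype.ext_iff, ne_eq]
  refine ⟨fun u => f u.1, fun u v => hfP u.1 v.1, fun u => hf0 u.1, ?_, ?_, ?_, ?_, ?_, ?_, ?_⟩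
  · obtain ⟨a, ha, hax⟩ := key A hA hAx
    exact ⟨⟨a, hax⟩, ha⟩
  · obtain ⟨b, hb, hbx⟩ := key B hB hBx
    exact ⟨⟨b, hbx⟩, hb⟩
  · rw [Set.disjoint_left]
    intro u hu hu'
    exact Set.disjoint_left.mp hdisj hu hu'
  · ext u
    have := Set.ext_iff.mp hun u.1
    simp only [Set.mem_union, Set.mem_setOf_eq] at this ⊢
    exact this
  · intro a ha a' ha' hne
    exact (hadj a a').mpr (hAcl a.1 ha a'.1 ha' (fun h => hne (Subtype.ext h)))
  · intro b hb b' hb' hne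
    exact (hadj b b').mpr (hBcl b.1 hb b'.1 hb' (fun h => hne (Subtype.ext h)))
  · intro a ha b hb h
    exact hAB a.1 ha b.1 hb ((hadj a b).mp h)
end

section
/- Let D be a metric on a finite set X. Any two block splits A₁|B₁ and A₂|B₂ of X relative to D are compatible, i.e., at least one of the four intersections A₁∩A₂, A₁∩B₂, B₁∩A₂, B₁∩B₂ is empty. -/
open Classical

variable {X : Type*}

theorem stmt6 [Fintype X] (D : X → X → ℝ) (hD : IsMetric D)
    (A₁ B₁ A₂ B₂ : Set X) (h1 : IsBlockSplit D A₁ B₁) (h2 : IsBlockSplit D A₂ B₂) :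
    A₁ ∩ A₂ = ∅ ∨ A₁ ∩ B₂ = ∅ ∨ B₁ ∩ A₂ = ∅ ∨ B₁ ∩ B₂ = ∅ := by
  by_contra h
  push_neg at h
  obtain ⟨hAA, hAB, hBA, hBB⟩ := h
  obtain ⟨p, hpA1, hpA2⟩ := hAA
  obtain ⟨q, hqA1, hqB2⟩ := hAB
  obtain ⟨r, hrB1, hrA2⟩ := hBA
  obtain ⟨s, hsB1, hsB2⟩ := hBB
  obtain ⟨f₁, _, hne1, _, _, hd1, _, hcA1, hcB1, hx1⟩ := h1
  obtain ⟨f₂, _, hne2, _, _, hd2, _, hcA2, hcB2, hx2⟩ := h2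
  have hpq : p ≠ q := fun e => Set.disjoint_left.mp hd2 hpA2 (e ▸ hqB2)
  have hrs : r ≠ s := fun e => Set.disjoint_left.mp hd2 hrA2 (e ▸ hsB2)
  have hpr : p ≠ r := fun e => Set.disjoint_left.mp hd1 hpA1 (e ▸ hrB1)
  have hqs : q ≠ s := fun e => Set.disjoint_left.mp hd1 hqA1 (e ▸ hsB1)
  -- from f₁
  have e1 : D p q < f₁ p + f₁ q := (hcA1 p hpA1 q hqA1 hpq).2.2.2
  have e2 : D r s < f₁ r + f₁ s := (hcB1 r hrB1 s hsB1 hrs).2.2.2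
  have e3 : f₁ p + f₁ r ≤ D p r := by
    by_contra hlt
    exact hx1 p hpA1 r hrB1 ⟨hpr, hne1 p, hne1 r, lt_of_not_ge hlt⟩
  have e4 : f₁ q + f₁ s ≤ D q s := by
    by_contra hlt
    exact hx1 q hqA1 s hsB1 ⟨hqs, hne1 q, hne1 s, lt_of_not_ge hlt⟩
  -- from f₂
  have g1 : D p r < f₂ p + f₂ r := (hcA2 p hpA2 r hrA2 hpr).2.2.2
  have g2 : D q s < f₂ q + f₂ s := (hcB2 q hqB2 s hsB2 hqs).2.2.2
  have g3 : f₂ p + f₂ q ≤ D p q := by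
    by_contra hlt
    exact hx2 p hpA2 q hqB2 ⟨hpq, hne2 p, hne2 q, lt_of_not_ge hlt⟩
  have g4 : f₂ r + f₂ s ≤ D r s := by
    by_contra hlt
    exact hx2 r hrA2 s hsB2 ⟨hrs, hne2 r, hne2 s, lt_of_not_ge hlt⟩
  linarith
end

section
/- Let D be a metric on a finite set X with n = |X| ≥ 2 elements. Then the set Σ_D of block splits of X relative to D contains at most 2n − 3 splits. -/
open Classical

variable {X : Type*}

section SplitAux

variable {X : Type*}

/-- `s` is a split of the set `Y`. -/
def SplitOf (Y : Set X) (s : Sym2 (Set X)) : Prop :=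
  ∃ A B : Set X, s = s(A, B) ∧ A.Nonempty ∧ B.Nonempty ∧ Disjoint A B ∧ A ∪ B = Y

/-- Two splits are compatible: some pair of sides is disjoint. -/
def Compat (s t : Sym2 (Set X)) : Prop :=
  ∃ A B C E : Set X, s = s(A, B) ∧ t = s(C, E) ∧
    (A ∩ C = ∅ ∨ A ∩ E = ∅ ∨ B ∩ C = ∅ ∨ B ∩ E = ∅)

lemma splitOf_pair {Y A B : Set X} (h : SplitOf Y s(A, B)) :
    A.Nonempty ∧ B.Nonempty ∧ Disjoint A B ∧ A ∪ B = Y := by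
  obtain ⟨C, E, hs, h1, h2, h3, h4⟩ := h
  rw [Sym2.eq_iff] at hs
  rcases hs with ⟨rfl, rfl⟩ | ⟨rfl, rfl⟩
  · exact ⟨h1, h2, h3, h4⟩
  · exact ⟨h2, h1, h3.symm, by rw [Set.union_comm]; exact h4⟩

lemma compat_pair {A B C E : Set X} (h : Compat s(A, B) s(C, E)) :
    A ∩ C = ∅ ∨ A ∩ E = ∅ ∨ B ∩ C = ∅ ∨ B ∩ E = ∅ := by
  obtain ⟨A', B', C', E', h1, h2, h3⟩ := h
  rw [Sym2.eq_iff] at h1 h2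
  rcases h1 with ⟨rfl, rfl⟩ | ⟨rfl, rfl⟩ <;> rcases h2 with ⟨rfl, rfl⟩ | ⟨rfl, rfl⟩ <;>
    tauto

lemma inter_diff_empty {C C' : Set X} (v : X) (h : C ∩ C' = ∅) :
    (C \ {v}) ∩ (C' \ {v}) = ∅ := by
  apply Set.eq_empty_of_subset_empty; rw [← h]
  exact Set.inter_subset_inter Set.diff_subset Set.diff_subset

lemma eq_of_diff_singleton_eq {x : X} {C C' : Set X} (hx : x ∈ C) (hx' : x ∈ C')
    (h : C \ {x} = C' \ {x}) : C = C' := by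
  have h2 : insert x (C \ {x}) = insert x (C' \ {x}) := by rw [h]
  rwa [Set.insert_diff_singleton, Set.insert_diff_singleton,
    Set.insert_eq_self.2 hx, Set.insert_eq_self.2 hx'] at h2

lemma insert_diff_self_of_mem {x : X} {C : Set X} (hx : x ∈ C) :
    insert x (C \ {x}) = C := by
  rw [Set.insert_diff_singleton, Set.insert_eq_self.2 hx]

lemma compl_of_split {Y C E : Set X} (hdis : Disjoint C E) (huni : C ∪ E = Y) :
    E = Y \ C := by
  ext w
  constructor
  · intro hw
    exact ⟨by rw [← huni]; exact Or.inr hw, fun hwC => Set.disjoint_left.1 hdis hwC hw⟩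
  · rintro ⟨hwY, hwC⟩
    rw [← huni] at hwY
    rcases hwY with h | h
    · exact absurd h hwC
    · exact h

lemma Y_diff_insert {Y C : Set X} {x : X} (hCY : C ⊆ Y) :
    Y \ insert x (Y \ C) = C \ {x} := by
  ext w
  simp only [Set.mem_diff, Set.mem_insert_iff, Set.mem_singleton_iff]
  constructor
  · rintro ⟨hwY, hw⟩
    push_neg at hw
    exact ⟨hw.2 hwY, hw.1⟩
  · rintro ⟨hwC, hwx⟩
    refine ⟨hCY hwC, ?_⟩
    push_neg
    exact ⟨hwx, fun _ => hwC⟩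

lemma eq_of_diff_same {u v : X} (huv : u ≠ v) {P Q : Set X}
    (hP : u ∈ P ↔ v ∈ P) (hQ : u ∈ Q ↔ v ∈ Q) (h : P \ {v} = Q \ {v}) : P = Q := by
  have key : ∀ P' Q' : Set X, (u ∈ P' ↔ v ∈ P') → (u ∈ Q' ↔ v ∈ Q') →
      P' \ {v} = Q' \ {v} → ∀ w, w ∈ P' → w ∈ Q' := by
    intro P' Q' hP' hQ' h' w hwP
    by_cases hw : w = v
    · have hu : u ∈ P' \ {v} :=
        ⟨hP'.2 (hw ▸ hwP), fun hm => huv (Set.mem_singleton_iff.1 hm)⟩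
      rw [h'] at hu
      rw [hw]
      exact hQ'.1 hu.1
    · have hm : w ∈ P' \ {v} := ⟨hwP, fun hm => hw (Set.mem_singleton_iff.1 hm)⟩
      rw [h'] at hm
      exact hm.1
  exact Set.Subset.antisymm (key P Q hP hQ h) (key Q P hQ hP h.symm)

end SplitAux

section FourSplits

variable {X : Type*}

lemma four_splits {Y : Set X} {x : X} {C C' : Set X}
    (hCY : C ⊆ Y) (hC'Y : C' ⊆ Y)
    (hxC : x ∈ C) (hxC' : x ∈ C')
    (hCx : C ≠ {x}) (hC'x : C' ≠ {x})
    (hCne : C ≠ Y) (hC'ne : C' ≠ Y)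
    (hne : C' ≠ C) (hne2 : C' ≠ insert x (Y \ C))
    (h1 : Compat s(C, Y \ C) s(C', Y \ C'))
    (h2 : Compat s(insert x (Y \ C), C \ {x}) s(C', Y \ C'))
    (h3 : Compat s(C, Y \ C) s(insert x (Y \ C'), C' \ {x}))
    (h4 : Compat s(insert x (Y \ C), C \ {x}) s(insert x (Y \ C'), C' \ {x})) :
    False := by
  have hmem : ∀ P Q : Set X, P ∩ Q = ∅ → ∀ w, w ∈ P → w ∈ Q → False := by
    intro P Q h w hwP hwQ
    rw [Set.eq_empty_iff_forall_notMem] at h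
    exact h w ⟨hwP, hwQ⟩
  have T1 : C ⊆ C' ∨ C' ⊆ C ∨ Y ⊆ C ∪ C' := by
    rcases compat_pair h1 with h | h | h | h
    · exact (hmem _ _ h x hxC hxC').elim
    · left; intro w hw; by_contra hw'
      exact hmem _ _ h w hw ⟨hCY hw, hw'⟩
    · right; left; intro w hw; by_contra hw'
      exact hmem _ _ h w ⟨hC'Y hw, hw'⟩ hw
    · right; right; intro w hw; by_contra hw'
      rw [Set.mem_union] at hw'; push_neg at hw'
      exact hmem _ _ h w ⟨hw, hw'.1⟩ ⟨hw, hw'.2⟩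
  have T2 : Y ⊆ C ∪ C' ∨ C ∩ C' = {x} ∨ C ⊆ C' := by
    rcases compat_pair h2 with h | h | h | h
    · exact (hmem _ _ h x (Set.mem_insert _ _) hxC').elim
    · left; intro w hw; by_contra hw'
      rw [Set.mem_union] at hw'; push_neg at hw'
      exact hmem _ _ h w (Set.mem_insert_of_mem _ ⟨hw, hw'.1⟩) ⟨hw, hw'.2⟩
    · right; left
      ext w
      simp only [Set.mem_inter_iff, Set.mem_singleton_iff]
      constructor
      · rintro ⟨hw1, hw2⟩
        by_contra hwx
        exact hmem _ _ h w ⟨hw1, by simp [hwx]⟩ hw2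
      · rintro rfl; exact ⟨hxC, hxC'⟩
    · right; right
      intro w hw
      by_cases hwx : w = x
      · subst hwx; exact hxC'
      · by_contra hw'
        exact hmem _ _ h w ⟨hw, by simp [hwx]⟩ ⟨hCY hw, hw'⟩
  have T3 : Y ⊆ C ∪ C' ∨ C ∩ C' = {x} ∨ C' ⊆ C := by
    rcases compat_pair h3 with h | h | h | h
    · exact (hmem _ _ h x hxC (Set.mem_insert _ _)).elim
    · right; left
      ext w
      simp only [Set.mem_inter_iff, Set.mem_singleton_iff]
      constructor
      · rintro ⟨hw1, hw2⟩
        by_contra hwx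
        exact hmem _ _ h w hw1 ⟨hw2, by simp [hwx]⟩
      · rintro rfl; exact ⟨hxC, hxC'⟩
    · left; intro w hw; by_contra hw'
      rw [Set.mem_union] at hw'; push_neg at hw'
      exact hmem _ _ h w ⟨hw, hw'.1⟩ (Set.mem_insert_of_mem _ ⟨hw, hw'.2⟩)
    · right; right
      intro w hw
      by_cases hwx : w = x
      · subst hwx; exact hxC
      · by_contra hw'
        exact hmem _ _ h w ⟨hC'Y hw, hw'⟩ ⟨hw, by simp [hwx]⟩
  have T4 : C' ⊆ C ∨ C ⊆ C' ∨ C ∩ C' = {x} := by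
    rcases compat_pair h4 with h | h | h | h
    · exact (hmem _ _ h x (Set.mem_insert _ _) (Set.mem_insert _ _)).elim
    · left
      intro w hw
      by_cases hwx : w = x
      · subst hwx; exact hxC
      · by_contra hw'
        exact hmem _ _ h w (Set.mem_insert_of_mem _ ⟨hC'Y hw, hw'⟩) ⟨hw, by simp [hwx]⟩
    · right; left
      intro w hw
      by_cases hwx : w = x
      · subst hwx; exact hxC'
      · by_contra hw'
        exact hmem _ _ h w ⟨hw, by simp [hwx]⟩ (Set.mem_insert_of_mem _ ⟨hCY hw, hw'⟩)
    · right; right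
      ext w
      simp only [Set.mem_inter_iff, Set.mem_singleton_iff]
      constructor
      · rintro ⟨hw1, hw2⟩
        by_contra hwx
        exact hmem _ _ h w ⟨hw1, by simp [hwx]⟩ ⟨hw2, by simp [hwx]⟩
      · rintro rfl; exact ⟨hxC, hxC'⟩
  have K1 : C ⊆ C' → False := by
    intro hsub
    rcases T3 with h | h | h
    · apply hC'ne
      apply Set.Subset.antisymm hC'Y
      intro w hw
      rcases h hw with h' | h'
      · exact hsub h'
      · exact h'
    · apply hCx
      apply Set.Subset.antisymm
      · intro w hw
        rw [← h]; exact ⟨hw, hsub hw⟩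
      · simp [Set.singleton_subset_iff, hxC]
    · exact hne (Set.Subset.antisymm h hsub)
  have K2 : C' ⊆ C → False := by
    intro hsub
    rcases T2 with h | h | h
    · apply hCne
      apply Set.Subset.antisymm hCY
      intro w hw
      rcases h hw with h' | h'
      · exact h'
      · exact hsub h'
    · apply hC'x
      apply Set.Subset.antisymm
      · intro w hw
        rw [← h]; exact ⟨hsub hw, hw⟩
      · simp [Set.singleton_subset_iff, hxC']
    · exact hne (Set.Subset.antisymm hsub h)
  have hYu : Y ⊆ C ∪ C' := by
    rcases T1 with h | h | h
    · exact (K1 h).elim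
    · exact (K2 h).elim
    · exact h
  have hint : C ∩ C' = {x} := by
    rcases T4 with h | h | h
    · exact (K2 h).elim
    · exact (K1 h).elim
    · exact h
  apply hne2
  ext w
  simp only [Set.mem_insert_iff, Set.mem_diff]
  constructor
  · intro hw
    by_cases hwx : w = x
    · exact Or.inl hwx
    · refine Or.inr ⟨hC'Y hw, fun hwC => ?_⟩
      have : w ∈ C ∩ C' := ⟨hwC, hw⟩
      rw [hint] at this
      exact hwx this
  · rintro (rfl | ⟨hwY, hwC⟩)
    · exact hxC'
    · rcases hYu hwY with h | h
      · exact absurd h hwC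
      · exact h

end FourSplits

section MainBound

variable {X : Type*}

lemma compat_ncard_bound [Fintype X] :
    ∀ (n : ℕ) (Y : Set X), Y.ncard = n →
      ∀ S : Set (Sym2 (Set X)), (∀ s ∈ S, SplitOf Y s) → S.Pairwise Compat →
        S.ncard ≤ 2 * n - 3 := by
  intro n
  induction n using Nat.strong_induction_on with
  | _ n IH =>
  intro Y hY S hS hC
  rcases Set.eq_empty_or_nonempty S with rfl | ⟨s₀, hs₀⟩
  · simp
  obtain ⟨A₀, B₀, hs₀eq, hA₀ne, hB₀ne, hdis₀, huni₀⟩ := hS s₀ hs₀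
  -- n ≥ 2
  have hn2 : 2 ≤ n := by
    obtain ⟨a, ha⟩ := hA₀ne
    obtain ⟨b, hb⟩ := hB₀ne
    have hab : a ≠ b := fun h => Set.disjoint_left.1 hdis₀ ha (h ▸ hb)
    have hsub : ({a, b} : Set X) ⊆ Y := by
      rw [← huni₀]
      rintro w (rfl | rfl)
      · exact Or.inl ha
      · exact Or.inr hb
    calc 2 = ({a, b} : Set X).ncard := (Set.ncard_pair hab).symm
      _ ≤ Y.ncard := Set.ncard_le_ncard hsub (Set.toFinite _)
      _ = n := hY
  rcases eq_or_lt_of_le hn2 with h2 | h3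
  · -- base case n = 2
    obtain ⟨a, b, hab, hYab⟩ := Set.ncard_eq_two.1 (hY.trans h2.symm)
    have key : ∀ s ∈ S, s = s(({a} : Set X), ({b} : Set X)) := by
      intro s hs
      obtain ⟨A, B, rfl, hAne, hBne, hdis, huni⟩ := hS s hs
      subst hYab
      have hmemY : ∀ w, w ∈ A ∪ B → w = a ∨ w = b := by
        intro w hw; rw [huni] at hw; exact hw
      have hcases : (A = {a} ∧ B = {b}) ∨ (A = {b} ∧ B = {a}) := by
        by_cases haA : a ∈ A
        · have hbB : b ∈ B := by
            by_contra hbB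
            obtain ⟨w, hw⟩ := hBne
            rcases hmemY w (Or.inr hw) with rfl | rfl
            · exact Set.disjoint_left.1 hdis haA hw
            · exact hbB hw
          left
          constructor
          · apply Set.Subset.antisymm
            · intro w hw
              rcases hmemY w (Or.inl hw) with rfl | rfl
              · rfl
              · exact absurd hw (fun h => Set.disjoint_left.1 hdis h hbB)
            · simp [haA]
          · apply Set.Subset.antisymm
            · intro w hw
              rcases hmemY w (Or.inr hw) with rfl | rfl
              · exact absurd hw (fun h => Set.disjoint_left.1 hdis haA h)
              · rfl
            · simp [hbB]
        · have haB : a ∈ B := by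
            rcases (huni ▸ (Set.mem_insert a {b}) : a ∈ A ∪ B) with h | h
            · exact absurd h haA
            · exact h
          have hbA : b ∈ A := by
            by_contra hbA
            obtain ⟨w, hw⟩ := hAne
            rcases hmemY w (Or.inl hw) with rfl | rfl
            · exact haA hw
            · exact hbA hw
          right
          constructor
          · apply Set.Subset.antisymm
            · intro w hw
              rcases hmemY w (Or.inl hw) with rfl | rfl
              · exact absurd hw haA
              · rfl
            · simp [hbA]
          · apply Set.Subset.antisymm
            · intro w hw
              rcases hmemY w (Or.inr hw) with rfl | rfl
              · rfl
              · exact absurd hw (fun h => Set.disjoint_left.1 hdis hbA h)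
            · simp [haB]
      rcases hcases with ⟨rfl, rfl⟩ | ⟨h1', h2'⟩
      · rfl
      · rw [h1', h2', Sym2.eq_iff]; tauto
    have hsub : S ⊆ {s(({a} : Set X), ({b} : Set X))} := fun s hs => key s hs
    have : S.ncard ≤ 1 := by
      calc S.ncard ≤ ({s(({a} : Set X), ({b} : Set X))} : Set (Sym2 (Set X))).ncard :=
            Set.ncard_le_ncard hsub (Set.toFinite _)
        _ = 1 := Set.ncard_singleton _
    omega
  · -- main case n ≥ 3
    -- a minimal side A
    have hSidesne : (A₀ : Set X) ∈ {A : Set X | ∃ B, s(A, B) ∈ S} := ⟨B₀, hs₀eq ▸ hs₀⟩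
    obtain ⟨A, hASides, hAmin⟩ : ∃ A ∈ {A : Set X | ∃ B, s(A, B) ∈ S},
        ∀ A' ∈ {A : Set X | ∃ B, s(A, B) ∈ S}, id A' ≤ id A → id A = id A' := by
      obtain ⟨A, h1, h2⟩ := Set.Finite.exists_minimalFor (id : Set X → Set X)
        {A : Set X | ∃ B, s(A, B) ∈ S} (Set.toFinite _) ⟨A₀, hSidesne⟩
      exact ⟨A, h1, fun A' hA' hle => le_antisymm (h2 hA' hle) hle⟩
    obtain ⟨B, hABS⟩ := hASides
    obtain ⟨hAne, hBne, hdisAB, huniAB⟩ := splitOf_pair (hS _ hABS)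
    have hAY : A ⊆ Y := huniAB ▸ Set.subset_union_left
    have hside : ∀ C E : Set X, s(C, E) ∈ S → A ⊆ C ∨ A ⊆ E := by
      intro C E hCE
      obtain ⟨hCne, hEne, hdisCE, huniCE⟩ := splitOf_pair (hS _ hCE)
      by_cases heq : s(C, E) = s(A, B)
      · rw [Sym2.eq_iff] at heq
        rcases heq with ⟨h1', h2'⟩ | ⟨h1', h2'⟩
        · exact Or.inl (by rw [h1'])
        · exact Or.inr (by rw [h2'])
      · have hcomp := hC hCE hABS heq
        rcases compat_pair hcomp with h | h | h | h
        · right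
          intro w hw
          have hwY : w ∈ Y := hAY hw
          rw [← huniCE] at hwY
          rcases hwY with h' | h'
          · exact (Set.eq_empty_iff_forall_notMem.1 h w ⟨h', hw⟩).elim
          · exact h'
        · left
          have hCA : C ⊆ A := by
            intro w hw
            have hwY : w ∈ Y := huniCE ▸ Or.inl hw
            rw [← huniAB] at hwY
            rcases hwY with h' | h'
            · exact h'
            · exact (Set.eq_empty_iff_forall_notMem.1 h w ⟨hw, h'⟩).elim
          exact le_of_eq (hAmin C ⟨E, hCE⟩ hCA)
        · left
          intro w hw
          have hwY : w ∈ Y := hAY hw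
          rw [← huniCE] at hwY
          rcases hwY with h' | h'
          · exact h'
          · exact (Set.eq_empty_iff_forall_notMem.1 h w ⟨h', hw⟩).elim
        · right
          have hEA : E ⊆ A := by
            intro w hw
            have hwY : w ∈ Y := huniCE ▸ Or.inr hw
            rw [← huniAB] at hwY
            rcases hwY with h' | h'
            · exact h'
            · exact (Set.eq_empty_iff_forall_notMem.1 h w ⟨hw, h'⟩).elim
          have hECS : s(E, C) ∈ S := by rw [Sym2.eq_swap]; exact hCE
          exact le_of_eq (hAmin E ⟨C, hECS⟩ hEA)
    have himgcompat : ∀ (v : X) (T'' : Set (Sym2 (Set X))), T'' ⊆ S →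
        ((Sym2.map (· \ ({v} : Set X))) '' T'').Pairwise Compat := by
      rintro v T'' hsubT σ ⟨s, hs, rfl⟩ τ ⟨t, ht, rfl⟩ hne'
      have hst : s ≠ t := fun h => hne' (by rw [h])
      obtain ⟨C, E, rfl, _, _, _, _⟩ := hS s (hsubT hs)
      obtain ⟨C', E', rfl, _, _, _, _⟩ := hS t (hsubT ht)
      have hcp := compat_pair (hC (hsubT hs) (hsubT ht) hst)
      rw [Sym2.map_pair_eq, Sym2.map_pair_eq]
      refine ⟨_, _, _, _, rfl, rfl, ?_⟩
      rcases hcp with h | h | h | h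
      · exact Or.inl (inter_diff_empty v h)
      · exact Or.inr (Or.inl (inter_diff_empty v h))
      · exact Or.inr (Or.inr (Or.inl (inter_diff_empty v h)))
      · exact Or.inr (Or.inr (Or.inr (inter_diff_empty v h)))
    by_cases htwo : ∃ u ∈ A, ∃ v ∈ A, u ≠ v
    · -- contraction case: two points never separated
      obtain ⟨u, hu, v, hv, huv⟩ := htwo
      have hvY : v ∈ Y := hAY hv
      have hsame : ∀ C E : Set X, s(C, E) ∈ S → (u ∈ C ↔ v ∈ C) ∧ (u ∈ E ↔ v ∈ E) := by
        intro C E h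
        obtain ⟨_, _, hdisCE, _⟩ := splitOf_pair (hS _ h)
        rcases hside C E h with hsub | hsub
        · refine ⟨iff_of_true (hsub hu) (hsub hv), iff_of_false ?_ ?_⟩
          · exact fun h' => Set.disjoint_left.1 hdisCE (hsub hu) h'
          · exact fun h' => Set.disjoint_left.1 hdisCE (hsub hv) h'
        · refine ⟨iff_of_false ?_ ?_, iff_of_true (hsub hu) (hsub hv)⟩
          · exact fun h' => Set.disjoint_left.1 hdisCE h' (hsub hu)
          · exact fun h' => Set.disjoint_left.1 hdisCE h' (hsub hv)
      have hinj : Set.InjOn (Sym2.map (· \ ({v} : Set X))) S := by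
        intro s hs t ht hst
        obtain ⟨C, E, rfl, _, _, hdis1, huni1⟩ := hS s hs
        obtain ⟨C', E', rfl, _, _, hdis2, huni2⟩ := hS t ht
        rw [Sym2.map_pair_eq, Sym2.map_pair_eq, Sym2.eq_iff] at hst
        rcases hst with ⟨hCC, hEE⟩ | ⟨hCE, hEC⟩
        · rw [eq_of_diff_same huv (hsame C E hs).1 (hsame C' E' ht).1 hCC,
            eq_of_diff_same huv (hsame C E hs).2 (hsame C' E' ht).2 hEE]
        · rw [Sym2.eq_iff]
          exact Or.inr ⟨eq_of_diff_same huv (hsame C E hs).1 (hsame C' E' ht).2 hCE,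
            eq_of_diff_same huv (hsame C E hs).2 (hsame C' E' ht).1 hEC⟩
      have hS' : ∀ σ ∈ (Sym2.map (· \ ({v} : Set X))) '' S, SplitOf (Y \ {v}) σ := by
        rintro σ ⟨s, hs, rfl⟩
        obtain ⟨C, E, rfl, hCne, hEne, hdis1, huni1⟩ := hS s hs
        rw [Sym2.map_pair_eq]
        refine ⟨_, _, rfl, ?_, ?_, hdis1.mono Set.diff_subset Set.diff_subset, ?_⟩
        · by_cases hvC : v ∈ C
          · exact ⟨u, (hsame C E hs).1.2 hvC, by simp [huv]⟩
          · obtain ⟨w, hw⟩ := hCne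
            exact ⟨w, hw, by simp; rintro rfl; exact hvC hw⟩
        · by_cases hvE : v ∈ E
          · exact ⟨u, (hsame C E hs).2.2 hvE, by simp [huv]⟩
          · obtain ⟨w, hw⟩ := hEne
            exact ⟨w, hw, by simp; rintro rfl; exact hvE hw⟩
        · rw [← Set.union_diff_distrib, huni1]
      have hC' := himgcompat v S subset_rfl
      have hcard' : (Y \ {v}).ncard = n - 1 := by
        have := Set.ncard_diff_singleton_add_one hvY (Set.toFinite _)
        omega
      have hb := IH (n - 1) (by omega) (Y \ {v}) hcard' _ hS' hC'
      have heq' : ((Sym2.map (· \ ({v} : Set X))) '' S).ncard = S.ncard :=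
        Set.ncard_image_of_injOn hinj
      omega
    · -- deletion case: the minimal side is a singleton
      push_neg at htwo
      obtain ⟨x, hx⟩ := hAne
      have hAx : A = {x} := by
        apply Set.Subset.antisymm
        · intro w hw
          exact htwo w hw x hx
        · simp [Set.singleton_subset_iff, hx]
      have hxY : x ∈ Y := hAY hx
      have hBeq : B = Y \ {x} := by
        rw [← hAx]
        exact compl_of_split hdisAB huniAB
      have hS₀ : s(({x} : Set X), Y \ {x}) ∈ S := by rw [← hBeq, ← hAx]; exact hABS
      have hxside : ∀ s ∈ S, ∀ C E : Set X, s = s(C, E) → x ∈ C ∨ x ∈ E := by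
        intro s hs C E hrep
        subst hrep
        rcases hside C E hs with h | h
        · exact Or.inl (h (hAx ▸ rfl))
        · exact Or.inr (h (hAx ▸ rfl))
      have hrep : ∀ s ∈ S \ {s(({x} : Set X), Y \ {x})},
          ∃ C : Set X, s = s(C, Y \ C) ∧ x ∈ C ∧ C ⊆ Y ∧ C ≠ {x} ∧ C ≠ Y ∧ (Y \ C).Nonempty := by
        intro s hs
        obtain ⟨C, E, rfl, hCne, hEne, hdis1, huni1⟩ := hS s hs.1
        have hCY' : C ⊆ Y := huni1 ▸ Set.subset_union_left
        have hEY' : E ⊆ Y := huni1 ▸ Set.subset_union_right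
        have hEeq : E = Y \ C := compl_of_split hdis1 huni1
        have hCeq : C = Y \ E := compl_of_split hdis1.symm (by rw [Set.union_comm]; exact huni1)
        rcases hxside _ hs.1 C E rfl with hxC | hxE
        · refine ⟨C, by rw [hEeq], hxC, hCY', ?_, ?_, hEeq ▸ hEne⟩
          · rintro rfl
            exact hs.2 (by rw [hEeq]; exact Set.mem_singleton _)
          · rintro rfl
            rw [hEeq] at hEne
            simp at hEne
        · refine ⟨E, ?_, hxE, hEY', ?_, ?_, hCeq ▸ hCne⟩
          · rw [Sym2.eq_iff]
            exact Or.inr ⟨hCeq, rfl⟩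
          · rintro rfl
            apply hs.2
            show s(C, {x}) = s(({x} : Set X), Y \ {x})
            rw [Sym2.eq_iff]
            exact Or.inr ⟨hCeq, rfl⟩
          · rintro rfl
            rw [hCeq] at hCne
            simp at hCne
      -- partner relation for collisions
      have hpartner : ∀ C C' : Set X, x ∈ C → x ∈ C' →
          Sym2.map (· \ ({x} : Set X)) s(C, Y \ C) = Sym2.map (· \ ({x} : Set X)) s(C', Y \ C') →
          C = C' ∨ C' = insert x (Y \ C) := by
        intro C C' hxC hxC' himg
        rw [Sym2.map_pair_eq, Sym2.map_pair_eq, Sym2.eq_iff] at himg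
        have hYC : (Y \ C) \ {x} = Y \ C := Set.diff_singleton_eq_self (fun h => h.2 hxC)
        have hYC' : (Y \ C') \ {x} = Y \ C' := Set.diff_singleton_eq_self (fun h => h.2 hxC')
        rcases himg with ⟨ha, _⟩ | ⟨_, hb⟩
        · exact Or.inl (eq_of_diff_singleton_eq hxC hxC' ha)
        · right
          rw [hYC] at hb
          calc C' = insert x (C' \ {x}) := (insert_diff_self_of_mem hxC').symm
            _ = insert x (Y \ C) := by rw [← hb]
      -- image splits
      have himgsplit : ∀ T'' ⊆ S \ {s(({x} : Set X), Y \ {x})},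
          ∀ σ ∈ (Sym2.map (· \ ({x} : Set X))) '' T'', SplitOf (Y \ {x}) σ := by
        intro T'' hsubT σ hσ
        obtain ⟨s, hsT, rfl⟩ := hσ
        obtain ⟨C, hC1, hxC, hCY', hCx, hCY2, hYCne⟩ := hrep s (hsubT hsT)
        rw [hC1, Sym2.map_pair_eq]
        have hYC : (Y \ C) \ {x} = Y \ C := Set.diff_singleton_eq_self (fun h => h.2 hxC)
        rw [hYC]
        refine ⟨_, _, rfl, ?_, hYCne, ?_, ?_⟩
        · by_contra hne'
          rw [Set.not_nonempty_iff_eq_empty, Set.diff_eq_empty] at hne'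
          exact hCx (Set.Subset.antisymm hne' (by simp [Set.singleton_subset_iff, hxC]))
        · rw [Set.disjoint_left]
          rintro w ⟨hw1, _⟩ ⟨_, hw2⟩
          exact hw2 hw1
        · ext w
          simp only [Set.mem_union, Set.mem_diff, Set.mem_singleton_iff]
          constructor
          · rintro (⟨hw1, hw2⟩ | ⟨hw1, hw2⟩)
            · exact ⟨hCY' hw1, hw2⟩
            · exact ⟨hw1, fun h => hw2 (h ▸ hxC)⟩
          · rintro ⟨hw1, hw2⟩
            by_cases hwC : w ∈ C
            · exact Or.inl ⟨hwC, hw2⟩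
            · exact Or.inr ⟨hw1, hwC⟩
      have hcard' : (Y \ {x}).ncard = n - 1 := by
        have := Set.ncard_diff_singleton_add_one hxY (Set.toFinite _)
        omega
      by_cases hcol : ∃ s ∈ S \ {s(({x} : Set X), Y \ {x})},
          ∃ t ∈ S \ {s(({x} : Set X), Y \ {x})}, s ≠ t ∧
            Sym2.map (· \ ({x} : Set X)) s = Sym2.map (· \ ({x} : Set X)) t
      · obtain ⟨s, hsT, t, htT, hst, himg⟩ := hcol
        obtain ⟨Cs, hsrep, hxCs, hCsY, hCsx, hCsY2, hYCsne⟩ := hrep s hsT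
        obtain ⟨Ct, htrep, hxCt, hCtY, hCtx, hCtY2, hYCtne⟩ := hrep t htT
        have hCt_eq : Ct = insert x (Y \ Cs) := by
          rcases hpartner Cs Ct hxCs hxCt (by rw [← hsrep, ← htrep]; exact himg) with h | h
          · exact absurd (by rw [hsrep, htrep, h]) hst
          · exact h
        have hT'inj : Set.InjOn (Sym2.map (· \ ({x} : Set X)))
            ((S \ {s(({x} : Set X), Y \ {x})}) \ {t}) := by
          intro a ha b hb hab
          by_contra habne
          obtain ⟨Ca, harep, hxCa, hCaY, hCax, hCaY2, hYCane⟩ := hrep a ha.1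
          obtain ⟨Cb, hbrep, hxCb, hCbY, hCbx, hCbY2, hYCbne⟩ := hrep b hb.1
          have hCb_eq : Cb = insert x (Y \ Ca) := by
            rcases hpartner Ca Cb hxCa hxCb (by rw [← harep, ← hbrep]; exact hab) with h | h
            · exact absurd (by rw [harep, hbrep, h]) habne
            · exact h
          have hat : a ≠ t := fun h => ha.2 h
          have hbt : b ≠ t := fun h => hb.2 h
          have has : a ≠ s := by
            intro h
            have hCaCs : Ca = Cs := by
              rcases Sym2.eq_iff.1 ((harep.symm.trans h).trans hsrep) with ⟨h1, _⟩ | ⟨h1, _⟩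
              · exact h1
              · exact absurd (h1 ▸ hxCa) (fun h' => h'.2 hxCs)
            apply hbt
            rw [hbrep, htrep, hCb_eq, hCt_eq, hCaCs]
          have hbs : b ≠ s := by
            intro h
            have hCbCs : Cb = Cs := by
              rcases Sym2.eq_iff.1 ((hbrep.symm.trans h).trans hsrep) with ⟨h1, _⟩ | ⟨h1, _⟩
              · exact h1
              · exact absurd (h1 ▸ hxCb) (fun h' => h'.2 hxCs)
            apply hat
            have hCtCa : Ct = Ca := by
              rw [hCt_eq, ← hCbCs, hCb_eq, Y_diff_insert hCaY, insert_diff_self_of_mem hxCa]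
            rw [harep, htrep, hCtCa]
          have hYdiffs : Y \ Ct = Cs \ {x} := by rw [hCt_eq, Y_diff_insert hCsY]
          have hYdiffb : Y \ Cb = Ca \ {x} := by rw [hCb_eq, Y_diff_insert hCaY]
          have h1' := hC hsT.1 ha.1.1 (Ne.symm has)
          have h2' := hC htT.1 ha.1.1 (Ne.symm hat)
          have h3' := hC hsT.1 hb.1.1 (Ne.symm hbs)
          have h4' := hC htT.1 hb.1.1 (Ne.symm hbt)
          rw [hsrep, harep] at h1'
          rw [htrep, harep] at h2'
          rw [hYdiffs, hCt_eq] at h2'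
          rw [hsrep, hbrep] at h3'
          rw [hYdiffb, hCb_eq] at h3'
          rw [htrep, hbrep] at h4'
          rw [hYdiffs, hYdiffb, hCt_eq, hCb_eq] at h4'
          have hCaCs' : Ca ≠ Cs := fun h => has (by rw [harep, hsrep, h])
          have hCa_ne2 : Ca ≠ insert x (Y \ Cs) := fun h =>
            hat (by rw [harep, htrep, hCt_eq, h])
          exact four_splits hCsY hCaY hxCs hxCa hCsx hCax hCsY2 hCaY2 hCaCs' hCa_ne2
            h1' h2' h3' h4'
        have himg1 := himgsplit ((S \ {s(({x} : Set X), Y \ {x})}) \ {t}) Set.diff_subset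
        have himg2 := himgcompat x ((S \ {s(({x} : Set X), Y \ {x})}) \ {t})
          (Set.diff_subset.trans Set.diff_subset)
        have hb := IH (n - 1) (by omega) (Y \ {x}) hcard' _ himg1 himg2
        have heqc := Set.ncard_image_of_injOn hT'inj
        have e1 : ((S \ {s(({x} : Set X), Y \ {x})}) \ {t}).ncard + 1
            = (S \ {s(({x} : Set X), Y \ {x})}).ncard :=
          Set.ncard_diff_singleton_add_one htT (Set.toFinite _)
        have e2 : (S \ {s(({x} : Set X), Y \ {x})}).ncard + 1 = S.ncard :=
          Set.ncard_diff_singleton_add_one hS₀ (Set.toFinite _)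
        omega
      · push_neg at hcol
        have hTinj : Set.InjOn (Sym2.map (· \ ({x} : Set X)))
            (S \ {s(({x} : Set X), Y \ {x})}) := by
          intro a ha b hb hab
          by_contra hne'
          exact hcol a ha b hb hne' hab
        have himg1 := himgsplit (S \ {s(({x} : Set X), Y \ {x})}) subset_rfl
        have himg2 := himgcompat x (S \ {s(({x} : Set X), Y \ {x})}) Set.diff_subset
        have hb := IH (n - 1) (by omega) (Y \ {x}) hcard' _ himg1 himg2
        have heqc := Set.ncard_image_of_injOn hTinj
        have e2 : (S \ {s(({x} : Set X), Y \ {x})}).ncard + 1 = S.ncard :=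
          Set.ncard_diff_singleton_add_one hS₀ (Set.toFinite _)
        omega

end MainBound


theorem stmt7 [Fintype X] (D : X → X → ℝ) (hD : IsMetric D)
    (hn : 2 ≤ Fintype.card X) :
    {s : Sym2 (Set X) | ∃ A B : Set X, s = s(A, B) ∧ IsBlockSplit D A B}.ncard ≤
      2 * Fintype.card X - 3 := by
  have hsplits : ∀ s ∈ {s : Sym2 (Set X) | ∃ A B : Set X, s = s(A, B) ∧ IsBlockSplit D A B},
      SplitOf (Set.univ) s := by
    rintro s ⟨A, B, rfl, f, hfP, hfne, hAne, hBne, hdis, hsupp, hclA, hclB, hcross⟩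
    refine ⟨A, B, rfl, hAne, hBne, hdis, ?_⟩
    rw [hsupp]
    exact Set.eq_univ_iff_forall.2 fun w => hfne w
  have hcompat : {s : Sym2 (Set X) | ∃ A B : Set X, s = s(A, B) ∧
      IsBlockSplit D A B}.Pairwise Compat := by
    intro s hs t ht _
    obtain ⟨A, B, rfl, f, hfP, hfne, hAne, hBne, hdis, hsupp, hclA, hclB, hcross⟩ := hs
    obtain ⟨A', B', rfl, f', hfP', hfne', hAne', hBne', hdis', hsupp', hclA', hclB', hcross'⟩ := ht
    refine ⟨A, B, A', B', rfl, rfl, ?_⟩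
    by_contra hcon
    push_neg at hcon
    obtain ⟨h1, h2, h3, h4⟩ := hcon
    obtain ⟨a, haA, haA'⟩ := h1
    obtain ⟨b, hbA, hbB'⟩ := h2
    obtain ⟨c, hcB, hcA'⟩ := h3
    obtain ⟨d, hdB, hdB'⟩ := h4
    have hab : a ≠ b := fun h => Set.disjoint_left.1 hdis' haA' (h ▸ hbB')
    have hcd : c ≠ d := fun h => Set.disjoint_left.1 hdis' hcA' (h ▸ hdB')
    have hac : a ≠ c := fun h => Set.disjoint_left.1 hdis haA (h ▸ hcB)
    have hbd : b ≠ d := fun h => Set.disjoint_left.1 hdis hbA (h ▸ hdB)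
    have l1 : D a b < f a + f b := (hclA a haA b hbA hab).2.2.2
    have l2 : D c d < f c + f d := (hclB c hcB d hdB hcd).2.2.2
    have e1 : D a c = f a + f c := by
      by_contra hne'
      exact hcross a haA c hcB ⟨hac, hfne a, hfne c, lt_of_le_of_ne (hfP a c) hne'⟩
    have e2 : D b d = f b + f d := by
      by_contra hne'
      exact hcross b hbA d hdB ⟨hbd, hfne b, hfne d, lt_of_le_of_ne (hfP b d) hne'⟩
    have l1' : D a c < f' a + f' c := (hclA' a haA' c hcA' hac).2.2.2
    have l2' : D b d < f' b + f' d := (hclB' b hbB' d hdB' hbd).2.2.2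
    have e1' : D a b = f' a + f' b := by
      by_contra hne'
      exact hcross' a haA' b hbB' ⟨hab, hfne' a, hfne' b, lt_of_le_of_ne (hfP' a b) hne'⟩
    have e2' : D c d = f' c + f' d := by
      by_contra hne'
      exact hcross' c hcA' d hdB' ⟨hcd, hfne' c, hfne' d, lt_of_le_of_ne (hfP' c d) hne'⟩
    linarith
  have huniv : (Set.univ : Set X).ncard = Fintype.card X := by
    rw [Set.ncard_univ, Nat.card_eq_fintype_card]
  have := compat_ncard_bound (Fintype.card X) Set.univ huniv _ hsplits hcompat
  exact this
end

section
/- Let D be a metric on a finite set X. If f ∈ P(D) and the graph Γ_f is disconnected (viewing Γ_f as a graph on vertex set supp(f)), then f is contained in the tight span T(D), i.e., f(x) = max_{y ∈ X}(D(x,y) − f(y)) holds for all x ∈ X. -/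
open Classical

variable {X : Type*}

theorem stmt10 [Fintype X] (D : X → X → ℝ) (hD : IsMetric D)
    (f : X → ℝ) (hf : memP D f) (hdis : Disconn D f) :
    memT D f := by
  obtain ⟨U, V, ⟨u0, hu0⟩, ⟨v0, hv0⟩, hUV, hsupp, hno⟩ := hdis
  intro x
  constructor
  · -- membership: find y with D x y - f y = f x
    by_cases hx : f x = 0
    · exact ⟨x, show D x x - f x = f x by rw [hD.1 x, hx]; ring⟩
    · have hxUV : x ∈ U ∪ V := by rw [hsupp]; exact hx
      rcases hxUV with hxU | hxV
      · have hv0f : f v0 ≠ 0 := by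
          have : v0 ∈ U ∪ V := Set.mem_union_right _ hv0
          rw [hsupp] at this; exact this
        have hne : x ≠ v0 := fun h => hUV.ne_of_mem hxU hv0 h
        have := hno x hxU v0 hv0
        have hle : f x + f v0 ≤ D x v0 := by
          by_contra h
          exact this ⟨hne, hx, hv0f, lt_of_not_ge h⟩
        have := hf x v0
        exact ⟨v0, show D x v0 - f v0 = f x by linarith⟩
      · have hu0f : f u0 ≠ 0 := by
          have : u0 ∈ U ∪ V := Set.mem_union_left _ hu0
          rw [hsupp] at this; exact this
        have hne : u0 ≠ x := fun h => hUV.ne_of_mem hu0 hxV h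
        have := hno u0 hu0 x hxV
        have hle : f u0 + f x ≤ D u0 x := by
          by_contra h
          exact this ⟨hne, hu0f, hx, lt_of_not_ge h⟩
        have h2 := hf x u0
        have hsym := hD.2.1 x u0
        exact ⟨u0, show D x u0 - f u0 = f x by rw [hsym]; linarith⟩
  · rintro z ⟨y, rfl⟩
    have := hf x y
    show D x y - f y ≤ f x
    linarith
end

section
/- Let D be a metric on a finite set X and let S = A|B be a block split of X. Define f_B := f_{A→0, B→α_S}, i.e., f_B(a) := D(a|B) for a ∈ A and f_B(b) := D(b|A) − α_S for b ∈ B. Then for any fixed a_S ∈ A and b_S ∈ B, one has f_B(a) = D(a_S|B) − D(a_S,b_S) + D(a,b_S) for all a ∈ A and f_B(b) = D(a_S,b) − D(a_S|B) for all b ∈ B. -/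
open Classical

variable {X : Type*}

private lemma csInf_translate (c : ℝ) (s t : Set ℝ) (hs : s.Nonempty)
    (hs0 : ∀ x ∈ s, 0 ≤ x)
    (h1 : ∀ x ∈ t, ∃ y ∈ s, x = c + y) (h2 : ∀ y ∈ s, c + y ∈ t) :
    sInf t = c + sInf s := by
  have hsb : BddBelow s := ⟨0, fun x hx => hs0 x hx⟩
  have htne : t.Nonempty := ⟨c + hs.choose, h2 _ hs.choose_spec⟩
  have htb : BddBelow t := ⟨c, fun x hx => by
    obtain ⟨y, hy, rfl⟩ := h1 x hx; linarith [hs0 y hy]⟩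
  apply le_antisymm
  · have : sInf t - c ≤ sInf s := le_csInf hs (fun y hy => by
      have := csInf_le htb (h2 y hy); linarith)
    linarith
  · exact le_csInf htne (fun x hx => by
      obtain ⟨y, hy, rfl⟩ := h1 x hx
      linarith [csInf_le hsb hy])

private lemma csInf_addSet (s₁ s₂ t : Set ℝ) (h1 : s₁.Nonempty) (h2 : s₂.Nonempty)
    (h10 : ∀ x ∈ s₁, 0 ≤ x) (h20 : ∀ x ∈ s₂, 0 ≤ x)
    (hmem : ∀ x ∈ t, ∃ y ∈ s₁, ∃ z ∈ s₂, x = y + z)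
    (hmem' : ∀ y ∈ s₁, ∀ z ∈ s₂, y + z ∈ t) :
    sInf t = sInf s₁ + sInf s₂ := by
  have hb1 : BddBelow s₁ := ⟨0, fun x hx => h10 x hx⟩
  have hb2 : BddBelow s₂ := ⟨0, fun x hx => h20 x hx⟩
  have htne : t.Nonempty := ⟨_, hmem' _ h1.choose_spec _ h2.choose_spec⟩
  have htb : BddBelow t := ⟨0, fun x hx => by
    obtain ⟨y, hy, z, hz, rfl⟩ := hmem x hx
    linarith [h10 y hy, h20 z hz]⟩
  apply le_antisymm
  · have key : ∀ y ∈ s₁, sInf t - y ≤ sInf s₂ := fun y hy =>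
      le_csInf h2 (fun z hz => by linarith [csInf_le htb (hmem' y hy z hz)])
    have : sInf t - sInf s₂ ≤ sInf s₁ := le_csInf h1 (fun y hy => by
      linarith [key y hy])
    linarith
  · exact le_csInf htne (fun x hx => by
      obtain ⟨y, hy, z, hz, rfl⟩ := hmem x hx
      have := csInf_le hb1 hy
      have := csInf_le hb2 hz
      linarith)

theorem stmt13 [Fintype X] (D : X → X → ℝ) (hD : IsMetric D) (A B : Set X)
    (hBS : IsBlockSplit D A B) (aS : X) (haS : aS ∈ A) (bS : X) (hbS : bS ∈ B) :
    (∀ a ∈ A, endpointB D A B a = kdist D aS B - D aS bS + D a bS) ∧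
    (∀ b ∈ B, endpointB D A B b = D aS b - kdist D aS B) := by
  obtain ⟨f, hfP, hf0, hAne, hBne, hdisj, hUn, hCA, hCB, hNadj⟩ := hBS
  obtain ⟨hDrefl, hDsymm, hDtri, hDpos⟩ := hD
  -- key: D a b = f a + f b for a ∈ A, b ∈ B
  have hab : ∀ a ∈ A, ∀ b ∈ B, D a b = f a + f b := by
    intro a ha b hb
    have hne : a ≠ b := fun h => Set.disjoint_left.mp hdisj ha (h ▸ hb)
    have h2 : ¬ D a b < f a + f b := fun hlt => hNadj a ha b hb ⟨hne, hf0 a, hf0 b, hlt⟩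
    linarith [hfP a b, not_lt.mp h2]
  set SA : Set ℝ := {z | ∃ a ∈ A, ∃ a' ∈ A, z = f a + f a' - D a a'} with hSA
  set SB : Set ℝ := {z | ∃ b ∈ B, ∃ b' ∈ B, z = f b + f b' - D b b'} with hSB
  obtain ⟨a₀, ha₀⟩ := hAne
  obtain ⟨b₀, hb₀⟩ := hBne
  have hSAne : SA.Nonempty := ⟨f a₀ + f a₀ - D a₀ a₀, a₀, ha₀, a₀, ha₀, rfl⟩
  have hSBne : SB.Nonempty := ⟨f b₀ + f b₀ - D b₀ b₀, b₀, hb₀, b₀, hb₀, rfl⟩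
  have hSA0 : ∀ x ∈ SA, 0 ≤ x := by
    rintro x ⟨a, ha, a', ha', rfl⟩; linarith [hfP a a']
  have hSB0 : ∀ x ∈ SB, 0 ≤ x := by
    rintro x ⟨b, hb, b', hb', rfl⟩; linarith [hfP b b']
  -- kdist D a B = f a + (1/2) sInf SB for a ∈ A
  have hkA : ∀ a ∈ A, kdist D a B = f a + (1/2) * sInf SB := by
    intro a ha
    have : sInf {z | ∃ y ∈ B, ∃ y' ∈ B, z = D a y + D a y' - D y y'}
        = 2 * f a + sInf SB := by
      apply csInf_translate _ _ _ hSBne hSB0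
      · rintro x ⟨b, hb, b', hb', rfl⟩
        exact ⟨f b + f b' - D b b', ⟨b, hb, b', hb', rfl⟩, by
          rw [hab a ha b hb, hab a ha b' hb']; ring⟩
      · rintro y ⟨b, hb, b', hb', rfl⟩
        exact ⟨b, hb, b', hb', by rw [hab a ha b hb, hab a ha b' hb']; ring⟩
    unfold kdist vdist
    rw [this]; ring
  -- kdist D b A = f b + (1/2) sInf SA for b ∈ B
  have hkB : ∀ b ∈ B, kdist D b A = f b + (1/2) * sInf SA := by
    intro b hb
    have : sInf {z | ∃ y ∈ A, ∃ y' ∈ A, z = D b y + D b y' - D y y'}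
        = 2 * f b + sInf SA := by
      apply csInf_translate _ _ _ hSAne hSA0
      · rintro x ⟨a, ha, a', ha', rfl⟩
        exact ⟨f a + f a' - D a a', ⟨a, ha, a', ha', rfl⟩, by
          rw [hDsymm b a, hDsymm b a', hab a ha b hb, hab a' ha' b hb]; ring⟩
      · rintro y ⟨a, ha, a', ha', rfl⟩
        exact ⟨a, ha, a', ha', by
          rw [hDsymm b a, hDsymm b a', hab a ha b hb, hab a' ha' b hb]; ring⟩
    unfold kdist vdist
    rw [this]; ring
  -- isolation index
  have hiso : isoIdx D A B = (1/2) * sInf SA + (1/2) * sInf SB := by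
    have : sInf {z | ∃ a ∈ A, ∃ a' ∈ A, ∃ b ∈ B, ∃ b' ∈ B,
        z = max (D a b + D a' b') (D a b' + D a' b) - D a a' - D b b'}
        = sInf SA + sInf SB := by
      apply csInf_addSet _ _ _ hSAne hSBne hSA0 hSB0
      · rintro x ⟨a, ha, a', ha', b, hb, b', hb', rfl⟩
        refine ⟨f a + f a' - D a a', ⟨a, ha, a', ha', rfl⟩,
          f b + f b' - D b b', ⟨b, hb, b', hb', rfl⟩, ?_⟩
        rw [hab a ha b hb, hab a' ha' b' hb', hab a ha b' hb', hab a' ha' b hb]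
        rw [show f a + f b + (f a' + f b') = f a + f b' + (f a' + f b) by ring,
          max_self]
        ring
      · rintro y ⟨a, ha, a', ha', rfl⟩ z ⟨b, hb, b', hb', rfl⟩
        refine ⟨a, ha, a', ha', b, hb, b', hb', ?_⟩
        rw [hab a ha b hb, hab a' ha' b' hb', hab a ha b' hb', hab a' ha' b hb]
        rw [show f a + f b + (f a' + f b') = f a + f b' + (f a' + f b) by ring,
          max_self]
        ring
    unfold isoIdx
    rw [this]; ring
  constructor
  · intro a ha
    have h1 := hkA a ha
    have h2 := hkA aS haS
    have h3 := hab aS haS bS hbS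
    have h4 := hab a ha bS hbS
    simp only [endpointB, if_pos ha]
    linarith
  · intro b hb
    have hbA : b ∉ A := fun h => Set.disjoint_left.mp hdisj h hb
    have h1 := hkB b hb
    have h2 := hkA aS haS
    have h3 := hab aS haS b hb
    simp only [endpointB, if_neg hbA]
    rw [hiso]
    linarith
end

section
/- Let D be a metric on a finite set X with at least 4 elements, and suppose A₁|B₁ and A₂|B₂ are splits of X such that for i = 1,2 there exist maps f_i ∈ P(D) with supp(f_i) = X and Γ_{f_i} the disjoint union of two cliques on A_i and B_i. If a ∈ A₁∩A₂, b ∈ B₁∩A₂, c ∈ A₁∩B₂, d ∈ B₁∩B₂, then D(a,b) + D(c,d) < D(a,c) + D(b,d) and D(a,c) + D(b,d) < D(a,b) + D(c,d), a contradiction; hence no such four elements exist. -/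
open Classical

variable {X : Type*}

theorem stmt15 [Fintype X] (D : X → X → ℝ) (hD : IsMetric D)
    (hcard : 4 ≤ Fintype.card X)
    (A₁ B₁ A₂ B₂ : Set X) (h1 : IsBlockSplit D A₁ B₁) (h2 : IsBlockSplit D A₂ B₂) :
    ∀ a ∈ A₁ ∩ A₂, ∀ b ∈ B₁ ∩ A₂, ∀ c ∈ A₁ ∩ B₂, ∀ d ∈ B₁ ∩ B₂, False := by
  intro a ha b hb c hc d hd
  obtain ⟨f₁, hP1, hnz1, -, -, hdisj1, -, hcA1, hcB1, hnadj1⟩ := h1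
  obtain ⟨f₂, hP2, hnz2, -, -, hdisj2, -, hcA2, hcB2, hnadj2⟩ := h2
  have hab : a ≠ b := hdisj1.ne_of_mem ha.1 hb.1
  have hcd : c ≠ d := hdisj1.ne_of_mem hc.1 hd.1
  have hac : a ≠ c := hdisj2.ne_of_mem ha.2 hc.2
  have hbd : b ≠ d := hdisj2.ne_of_mem hb.2 hd.2
  have had : a ≠ d := hdisj1.ne_of_mem ha.1 hd.1
  have hcb : c ≠ b := hdisj1.ne_of_mem hc.1 hb.1
  have key : ∀ (f : X → ℝ) (u v : X), memP D f → (∀ x, f x ≠ 0) → u ≠ v →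
      ¬ adj D f u v → f u + f v = D u v := by
    intro f u v hP hnz huv hna
    have h1 := hP u v
    have h2 : ¬ D u v < f u + f v := fun h => hna ⟨huv, hnz u, hnz v, h⟩
    linarith [not_lt.mp h2]
  have e1 := key f₁ a b hP1 hnz1 hab (hnadj1 a ha.1 b hb.1)
  have e2 := key f₁ c d hP1 hnz1 hcd (hnadj1 c hc.1 d hd.1)
  have e3 := key f₂ a c hP2 hnz2 hac (hnadj2 a ha.2 c hc.2)
  have e4 := key f₂ b d hP2 hnz2 hbd (hnadj2 b hb.2 d hd.2)
  have s1 := (hcA1 a ha.1 c hc.1 hac).2.2.2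
  have s2 := (hcB1 b hb.1 d hd.1 hbd).2.2.2
  have s3 := (hcA2 a ha.2 b hb.2 hab).2.2.2
  have s4 := (hcB2 c hc.2 d hd.2 hcd).2.2.2
  linarith
end

section
/- Let D be a metric on a finite set X and S = A|B a block split of X. Then D(f|A) + D(f|B) = α_S for every f ∈ P(D) satisfying f(a) + f(b) = D(a,b) for all a ∈ A and b ∈ B. -/
open Classical

variable {X : Type*}

theorem stmt16 [Fintype X] (D : X → X → ℝ) (hD : IsMetric D) (A B : Set X)
    (hBS : IsBlockSplit D A B) (f : X → ℝ) (hf : memP D f)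
    (he : ∀ a ∈ A, ∀ b ∈ B, f a + f b = D a b) :
    vdist D f A + vdist D f B = isoIdx D A B := by
  obtain ⟨g, hg, hgnz, hA, hB, hdisj, hcover, _, _, _⟩ := hBS
  set SA := {z | ∃ y ∈ A, ∃ y' ∈ A, z = f y + f y' - D y y'} with hSAdef
  set SB := {z | ∃ y ∈ B, ∃ y' ∈ B, z = f y + f y' - D y y'} with hSBdef
  set SC := {z | ∃ a ∈ A, ∃ a' ∈ A, ∃ b ∈ B, ∃ b' ∈ B,
      z = max (D a b + D a' b') (D a b' + D a' b) - D a a' - D b b'} with hSCdef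
  have hkey : ∀ a ∈ A, ∀ a' ∈ A, ∀ b ∈ B, ∀ b' ∈ B,
      max (D a b + D a' b') (D a b' + D a' b) - D a a' - D b b'
        = (f a + f a' - D a a') + (f b + f b' - D b b') := by
    intro a ha a' ha' b hb b' hb'
    rw [← he a ha b hb, ← he a' ha' b' hb', ← he a ha b' hb', ← he a' ha' b hb]
    rw [show (f a + f b) + (f a' + f b') = (f a + f b') + (f a' + f b) from by ring,
      max_self]
    ring
  obtain ⟨a0, ha0⟩ := hA
  obtain ⟨b0, hb0⟩ := hB
  have hSAne : SA.Nonempty := ⟨_, a0, ha0, a0, ha0, rfl⟩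
  have hSBne : SB.Nonempty := ⟨_, b0, hb0, b0, hb0, rfl⟩
  have hSCne : SC.Nonempty := ⟨_, a0, ha0, a0, ha0, b0, hb0, b0, hb0, rfl⟩
  have hSAfin : SA.Finite := Set.Finite.subset
    (Set.finite_range fun p : X × X => f p.1 + f p.2 - D p.1 p.2)
    (by rintro z ⟨a, ha, a', ha', rfl⟩; exact ⟨(a, a'), rfl⟩)
  have hSBfin : SB.Finite := Set.Finite.subset
    (Set.finite_range fun p : X × X => f p.1 + f p.2 - D p.1 p.2)
    (by rintro z ⟨a, ha, a', ha', rfl⟩; exact ⟨(a, a'), rfl⟩)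
  have hSCfin : SC.Finite := Set.Finite.subset
    (Set.finite_range fun p : (X × X) × X × X =>
      max (D p.1.1 p.2.1 + D p.1.2 p.2.2) (D p.1.1 p.2.2 + D p.1.2 p.2.1)
        - D p.1.1 p.1.2 - D p.2.1 p.2.2)
    (by rintro z ⟨a, ha, a', ha', b, hb, b', hb', rfl⟩; exact ⟨((a, a'), (b, b')), rfl⟩)
  obtain ⟨a, ha, a', ha', hEA⟩ := hSAne.csInf_mem hSAfin
  obtain ⟨b, hb, b', hb', hEB⟩ := hSBne.csInf_mem hSBfin
  have hle : sInf SC ≤ sInf SA + sInf SB := by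
    refine csInf_le hSCfin.bddBelow ⟨a, ha, a', ha', b, hb, b', hb', ?_⟩
    rw [hkey a ha a' ha' b hb b' hb', ← hEA, ← hEB]
  have hge : sInf SA + sInf SB ≤ sInf SC := by
    refine le_csInf hSCne ?_
    rintro z ⟨a1, ha1, a1', ha1', b1, hb1, b1', hb1', rfl⟩
    rw [hkey a1 ha1 a1' ha1' b1 hb1 b1' hb1']
    exact add_le_add (csInf_le hSAfin.bddBelow ⟨a1, ha1, a1', ha1', rfl⟩)
      (csInf_le hSBfin.bddBelow ⟨b1, hb1, b1', hb1', rfl⟩)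
  show (1 / 2) * sInf SA + (1 / 2) * sInf SB = (1 / 2) * sInf SC
  linarith [le_antisymm hge hle]
end

section
/- Let D be a metric on a finite set X, x ∈ X, X' := X \ {x}, and D' the restriction of D to X'. Suppose f ∈ T(D) is a cutpoint whose graph Γ_f is disconnected but such that there is no block split S = A|B of X with f ∈ {f_A, f_B}. If the restriction f' of f to X' has Γ_{f'} connected or equal to the disjoint union of two cliques, then there exists a connected component of Γ_f whose vertex set A is a clique with D(f|A) > 0, and, setting B := X \ A, the split A|B is a block split of X with f = f_B. -/
open Classical

variable {X : Type*}

lemma adjSymm {D : X → X → ℝ} {f : X → ℝ} (hD : IsMetric D) {u v : X}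
    (h : adj D f u v) : adj D f v u :=
  ⟨h.1.symm, h.2.2.1, h.2.1, by rw [hD.2.1 v u]; linarith [h.2.2.2]⟩

lemma vdistSetFin [Fintype X] (F : X → X → ℝ) (A : Set X) :
    {z | ∃ y ∈ A, ∃ y' ∈ A, z = F y y'}.Finite := by
  apply Set.Finite.subset (Set.finite_range fun p : X × X => F p.1 p.2)
  rintro z ⟨y, -, y', -, rfl⟩; exact ⟨(y, y'), rfl⟩

lemma isoSetFin [Fintype X] (F : X → X → X → X → ℝ) (A B : Set X) :
    {z | ∃ a ∈ A, ∃ a' ∈ A, ∃ b ∈ B, ∃ b' ∈ B, z = F a a' b b'}.Finite := by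
  apply Set.Finite.subset
    (Set.finite_range fun p : (X × X) × (X × X) => F p.1.1 p.1.2 p.2.1 p.2.2)
  rintro z ⟨a, -, a', -, b, -, b', -, rfl⟩; exact ⟨((a, a'), (b, b')), rfl⟩

lemma analytic [Fintype X] (D : X → X → ℝ) (hD : IsMetric D) (f : X → ℝ)
    (hfP : memP D f) (hpos : ∀ y, 0 < f y)
    (A : Set X) (hAne : A.Nonempty) (hBne : Aᶜ.Nonempty)
    (hclq : ∀ a ∈ A, ∀ a' ∈ A, a ≠ a' → adj D f a a')
    (hcross : ∀ a ∈ A, ∀ y : X, y ∉ A → ¬ adj D f a y)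
    (hpair : ∃ b ∈ Aᶜ, ∃ b' ∈ Aᶜ, f b + f b' = D b b') :
    0 < vdist D f A ∧ IsBlockSplit D A Aᶜ ∧ f = endpointB D A Aᶜ := by
  obtain ⟨Dxx, Dsym, Dtri, Dpos⟩ := hD
  -- cross equality
  have hcrossEq : ∀ a ∈ A, ∀ b ∈ Aᶜ, D a b = f a + f b := by
    intro a ha b hb
    have hne : a ≠ b := fun h => hb (h ▸ ha)
    have h4 : ¬ D a b < f a + f b := fun hlt =>
      hcross a ha b hb ⟨hne, (hpos a).ne', (hpos b).ne', hlt⟩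
    linarith [hfP a b, not_lt.mp h4]
  have hclqLt : ∀ a ∈ A, ∀ a' ∈ A, D a a' < f a + f a' := by
    intro a ha a' ha'
    by_cases h : a = a'
    · subst h; rw [Dxx]; linarith [hpos a]
    · exact (hclq a ha a' ha' h).2.2.2
  -- the set S for vdist
  set S : Set ℝ := {z | ∃ y ∈ A, ∃ y' ∈ A, z = f y + f y' - D y y'} with hS
  have hSfin : S.Finite := vdistSetFin _ _
  obtain ⟨a₁, ha₁⟩ := id hAne
  have hSne : S.Nonempty := ⟨f a₁ + f a₁ - D a₁ a₁, a₁, ha₁, a₁, ha₁, rfl⟩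
  set m : ℝ := sInf S with hm
  have hmem : m ∈ S := hSne.csInf_mem hSfin
  have hmpos : 0 < m := by
    obtain ⟨y, hy, y', hy', hz⟩ := hmem
    rw [hz]; linarith [hclqLt y hy y' hy']
  have hmle : ∀ y ∈ A, ∀ y' ∈ A, m ≤ f y + f y' - D y y' := by
    intro y hy y' hy'
    exact csInf_le hSfin.bddBelow ⟨y, hy, y', hy', rfl⟩
  obtain ⟨a₀, ha₀, a₀', ha₀', hm_eq⟩ := hmem
  obtain ⟨b₀, hb₀, b₀', hb₀', hpeq⟩ := hpair
  have hvd : vdist D f A = (1 / 2) * m := rfl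
  have hfge : ∀ a ∈ A, m / 2 ≤ f a := by
    intro a ha
    have := hmle a ha a ha
    rw [Dxx] at this; linarith
  refine ⟨by rw [hvd]; linarith, ?_, ?_⟩
  · -- block split witness
    refine ⟨fun y => if y ∈ A then f y - m / 4 else f y + m / 4, ?_, ?_, ?_⟩
    · intro u v
      beta_reduce
      by_cases hu : u ∈ A <;> by_cases hv : v ∈ A
      · rw [if_pos hu, if_pos hv]; have := hmle u hu v hv; linarith
      · rw [if_pos hu, if_neg hv]; have := hcrossEq u hu v hv; linarith
      · rw [if_neg hu, if_pos hv]; have := hfP u v; linarith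
      · rw [if_neg hu, if_neg hv]; have := hfP u v; linarith
    · intro y
      beta_reduce
      by_cases hy : y ∈ A
      · rw [if_pos hy]; have := hfge y hy; intro h; linarith
      · rw [if_neg hy]; have := hpos y; intro h; linarith
    · refine ⟨hAne, hBne, disjoint_compl_right, ?_, ?_, ?_, ?_⟩
      · ext y
        simp only [Set.mem_union, Set.mem_compl_iff, Set.mem_setOf_eq]
        constructor
        · intro _
          by_cases hy : y ∈ A
          · rw [if_pos hy]; have := hfge y hy; intro h; linarith
          · rw [if_neg hy]; have := hpos y; intro h; linarith
        · intro _; exact Classical.em _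
      · intro a ha a' ha' hne
        have h1 := hmle a ha a' ha'
        have h2 := hfge a ha
        have h3 := hfge a' ha'
        refine ⟨hne, ?_, ?_, ?_⟩
        all_goals beta_reduce
        · rw [if_pos ha]; intro h; linarith
        · rw [if_pos ha']; intro h; linarith
        · rw [if_pos ha, if_pos ha']; linarith
      · intro b hb b' hb' hne
        have hb1 : b ∉ A := hb
        have hb2 : b' ∉ A := hb'
        have h2 := hpos b
        have h3 := hpos b'
        have h4 := hfP b b'
        refine ⟨hne, ?_, ?_, ?_⟩
        all_goals beta_reduce
        · rw [if_neg hb1]; intro h; linarith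
        · rw [if_neg hb2]; intro h; linarith
        · rw [if_neg hb1, if_neg hb2]; linarith
      · intro a ha b hb hadj
        have h4 := hadj.2.2.2
        have hb1 : b ∉ A := hb
        beta_reduce at h4
        rw [if_pos ha, if_neg hb1] at h4
        rw [hcrossEq a ha b hb] at h4; linarith
  · -- f = endpointB
    funext y
    simp only [endpointB]
    by_cases hy : y ∈ A
    · rw [if_pos hy]
      have hk : kdist D y Aᶜ = (1 / 2) * sInf
          {z | ∃ b ∈ Aᶜ, ∃ b' ∈ Aᶜ, z = D y b + D y b' - D b b'} := rfl
      have hleast : IsLeast {z | ∃ b ∈ Aᶜ, ∃ b' ∈ Aᶜ, z = D y b + D y b' - D b b'}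
          (2 * f y) := by
        constructor
        · refine ⟨b₀, hb₀, b₀', hb₀', ?_⟩
          rw [hcrossEq y hy b₀ hb₀, hcrossEq y hy b₀' hb₀', ← hpeq]; ring
        · rintro z ⟨b, hb, b', hb', rfl⟩
          rw [hcrossEq y hy b hb, hcrossEq y hy b' hb']
          linarith [hfP b b']
      rw [hk, hleast.csInf_eq]; ring
    · rw [if_neg hy]
      have hyc : y ∈ Aᶜ := hy
      have hk : kdist D y A = (1 / 2) * sInf
          {z | ∃ a ∈ A, ∃ a' ∈ A, z = D y a + D y a' - D a a'} := rfl
      have hleast : IsLeast {z | ∃ a ∈ A, ∃ a' ∈ A, z = D y a + D y a' - D a a'}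
          (2 * f y + m) := by
        constructor
        · refine ⟨a₀, ha₀, a₀', ha₀', ?_⟩
          rw [Dsym y a₀, Dsym y a₀', hcrossEq a₀ ha₀ y hyc,
            hcrossEq a₀' ha₀' y hyc]
          rw [hm_eq]; ring
        · rintro z ⟨a, ha, a', ha', rfl⟩
          rw [Dsym y a, Dsym y a', hcrossEq a ha y hyc, hcrossEq a' ha' y hyc]
          have := hmle a ha a' ha'; linarith
      have hiso : isoIdx D A Aᶜ = (1 / 2) * m := by
        have hleast2 : IsLeast {z | ∃ a ∈ A, ∃ a' ∈ A, ∃ b ∈ Aᶜ, ∃ b' ∈ Aᶜ,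
            z = max (D a b + D a' b') (D a b' + D a' b) - D a a' - D b b'} m := by
          constructor
          · refine ⟨a₀, ha₀, a₀', ha₀', b₀, hb₀, b₀', hb₀', ?_⟩
            rw [hcrossEq a₀ ha₀ b₀ hb₀, hcrossEq a₀' ha₀' b₀' hb₀',
              hcrossEq a₀ ha₀ b₀' hb₀', hcrossEq a₀' ha₀' b₀ hb₀]
            rw [show f a₀ + f b₀ + (f a₀' + f b₀') =
              f a₀ + f b₀' + (f a₀' + f b₀) by ring, max_self, ← hpeq, hm_eq]
            ring
          · rintro z ⟨a, ha, a', ha', b, hb, b', hb', rfl⟩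
            rw [hcrossEq a ha b hb, hcrossEq a' ha' b' hb',
              hcrossEq a ha b' hb', hcrossEq a' ha' b hb]
            rw [show f a + f b + (f a' + f b') =
              f a + f b' + (f a' + f b) by ring, max_self]
            have h1 := hmle a ha a' ha'
            have h2 := hfP b b'
            linarith
        show (1 / 2) * sInf _ = (1 / 2) * m
        rw [hleast2.csInf_eq]
      rw [hk, hleast.csInf_eq, hiso]; ring

lemma combin (D : X → X → ℝ) (hD : IsMetric D) (f : X → ℝ) (x : X)
    (hsupp : ∀ y, f y ≠ 0) (hdis : Disconn D f)
    (hrest : ¬ Disconn (fun u v : {y : X // y ≠ x} => D u.1 v.1)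
        (fun u : {y : X // y ≠ x} => f u.1) ∨
      ∃ A' B' : Set {y : X // y ≠ x},
        DisjUnionTwoCliques (fun u v : {y : X // y ≠ x} => D u.1 v.1)
          (fun u : {y : X // y ≠ x} => f u.1) A' B') :
    ∃ A : Set X, A.Nonempty ∧ Aᶜ.Nonempty ∧
      (∀ a ∈ A, ∀ a' ∈ A, a ≠ a' → adj D f a a') ∧
      (∀ a ∈ A, ∀ y : X, y ∉ A → ¬ adj D f a y) := by
  obtain ⟨U, V, hUne, hVne, hUV, hUVu, hnadj⟩ := hdis
  have huniv : U ∪ V = Set.univ := by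
    rw [hUVu]; ext y; simp [hsupp y]
  have hmemUV : ∀ y : X, y ∈ U ∨ y ∈ V := by
    intro y
    have : y ∈ U ∪ V := huniv ▸ Set.mem_univ y
    exact this
  rcases hrest with hnd | ⟨A', B', hA'ne, hB'ne, hdisj', huni', hclqA', hclqB', hcr'⟩
  · -- Γ_f' not disconnected : one of U, V is {x}
    have hsing : (∀ u ∈ U, u = x) ∨ (∀ v ∈ V, v = x) := by
      by_contra hcon
      push_neg at hcon
      obtain ⟨⟨u, hu, hux⟩, ⟨v, hv, hvx⟩⟩ := hcon
      apply hnd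
      refine ⟨{w | w.1 ∈ U}, {w | w.1 ∈ V}, ⟨⟨u, hux⟩, hu⟩, ⟨⟨v, hvx⟩, hv⟩, ?_, ?_, ?_⟩
      · rw [Set.disjoint_left]
        intro w hw hw'
        exact Set.disjoint_left.mp hUV hw hw'
      · ext w
        simp only [Set.mem_union, Set.mem_setOf_eq]
        exact iff_of_true (hmemUV w.1) (hsupp w.1)
      · rintro p hp q hq ⟨h1, h2, h3, h4⟩
        exact hnadj p.1 hp q.1 hq ⟨fun h => h1 (Subtype.ext h), h2, h3, h4⟩
    rcases hsing with hU | hV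
    · refine ⟨U, hUne, ?_, ?_, ?_⟩
      · obtain ⟨v, hv⟩ := hVne
        exact ⟨v, Set.disjoint_left.mp hUV.symm hv⟩
      · intro a ha a' ha' hne
        exact absurd ((hU a ha).trans (hU a' ha').symm) hne
      · intro a ha y hy
        rcases hmemUV y with h | h
        · exact absurd h hy
        · exact hnadj a ha y h
    · refine ⟨V, hVne, ?_, ?_, ?_⟩
      · obtain ⟨u, hu⟩ := hUne
        exact ⟨u, Set.disjoint_left.mp hUV hu⟩
      · intro a ha a' ha' hne
        exact absurd ((hV a ha).trans (hV a' ha').symm) hne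
      · intro a ha y hy
        rcases hmemUV y with h | h
        · exact fun hadj => hnadj y h a ha (adjSymm hD hadj)
        · exact absurd h hy
  · -- Γ_f' is two cliques A', B'
    set A₀ : Set X := Subtype.val '' A' with hA₀
    set B₀ : Set X := Subtype.val '' B' with hB₀
    have hA₀ne : A₀.Nonempty := hA'ne.image _
    have hB₀ne : B₀.Nonempty := hB'ne.image _
    have hxA₀ : x ∉ A₀ := by rintro ⟨w, -, hw⟩; exact w.2 hw
    have hxB₀ : x ∉ B₀ := by rintro ⟨w, -, hw⟩; exact w.2 hw
    have hcover : ∀ y : X, y ≠ x → y ∈ A₀ ∨ y ∈ B₀ := by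
      intro y hy
      have : (⟨y, hy⟩ : {y : X // y ≠ x}) ∈ A' ∪ B' := by
        rw [huni']; exact hsupp y
      rcases this with h | h
      · exact Or.inl ⟨⟨y, hy⟩, h, rfl⟩
      · exact Or.inr ⟨⟨y, hy⟩, h, rfl⟩
    have hclqA₀ : ∀ a ∈ A₀, ∀ a' ∈ A₀, a ≠ a' → adj D f a a' := by
      rintro a ⟨w, hw, rfl⟩ a' ⟨w', hw', rfl⟩ hne
      have := hclqA' w hw w' hw' (fun h => hne (congrArg Subtype.val h))
      exact ⟨hne, this.2.1, this.2.2.1, this.2.2.2⟩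
    have hclqB₀ : ∀ b ∈ B₀, ∀ b' ∈ B₀, b ≠ b' → adj D f b b' := by
      rintro b ⟨w, hw, rfl⟩ b' ⟨w', hw', rfl⟩ hne
      have := hclqB' w hw w' hw' (fun h => hne (congrArg Subtype.val h))
      exact ⟨hne, this.2.1, this.2.2.1, this.2.2.2⟩
    have hcr₀ : ∀ p ∈ A₀, ∀ q ∈ B₀, ¬ adj D f p q := by
      rintro p ⟨w, hw, rfl⟩ q ⟨w', hw', rfl⟩ hadj
      exact hcr' w hw w' hw'
        ⟨fun h => hadj.1 (congrArg Subtype.val h), hadj.2.1, hadj.2.2.1, hadj.2.2.2⟩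
    by_cases h1 : ∀ b ∈ B₀, ¬ adj D f x b
    · refine ⟨B₀, hB₀ne, ⟨x, hxB₀⟩, hclqB₀, ?_⟩
      intro a ha y hy hadj
      by_cases hyx : y = x
      · subst hyx
        exact h1 a ha (adjSymm hD hadj)
      · rcases hcover y hyx with h | h
        · exact hcr₀ y h a ha (adjSymm hD hadj)
        · exact hy h
    · by_cases h2 : ∀ a ∈ A₀, ¬ adj D f x a
      · refine ⟨A₀, hA₀ne, ⟨x, hxA₀⟩, hclqA₀, ?_⟩
        intro a ha y hy hadj
        by_cases hyx : y = x
        · subst hyx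
          exact h2 a ha (adjSymm hD hadj)
        · rcases hcover y hyx with h | h
          · exact hy h
          · exact hcr₀ a ha y h hadj
      · -- x adjacent into both cliques: contradiction with Disconn
        exfalso
        push_neg at h1 h2
        obtain ⟨b₀, hb₀, hxb₀⟩ := h1
        obtain ⟨a₀, ha₀, hxa₀⟩ := h2
        have key : ∀ U' V' : Set X, V'.Nonempty → Disjoint U' V' →
            U' ∪ V' = Set.univ → (∀ u ∈ U', ∀ v ∈ V', ¬ adj D f u v) →
            x ∈ U' → False := by
          intro U' V' hV'ne hdj hun hnad hxU
          have hmem' : ∀ y : X, y ∈ U' ∨ y ∈ V' := by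
            intro y
            have : y ∈ U' ∪ V' := hun ▸ Set.mem_univ y
            exact this
          have step : ∀ y z : X, y ∈ U' → adj D f y z → z ∈ U' := by
            intro y z hy hadj
            rcases hmem' z with h | h
            · exact h
            · exact absurd hadj (hnad y hy z h)
          have ha₀U : a₀ ∈ U' := step x a₀ hxU hxa₀
          have hb₀U : b₀ ∈ U' := step x b₀ hxU hxb₀
          have hAU : ∀ a ∈ A₀, a ∈ U' := by
            intro a ha
            by_cases h : a = a₀
            · exact h ▸ ha₀U
            · exact step a₀ a ha₀U (hclqA₀ a₀ ha₀ a ha (fun hh => h hh.symm))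
          have hBU : ∀ b ∈ B₀, b ∈ U' := by
            intro b hb
            by_cases h : b = b₀
            · exact h ▸ hb₀U
            · exact step b₀ b hb₀U (hclqB₀ b₀ hb₀ b hb (fun hh => h hh.symm))
          obtain ⟨v, hv⟩ := hV'ne
          have hvU : v ∈ U' := by
            by_cases hvx : v = x
            · exact hvx ▸ hxU
            · rcases hcover v hvx with h | h
              · exact hAU v h
              · exact hBU v h
          exact Set.disjoint_left.mp hdj hvU hv
        rcases hmemUV x with hx | hx
        · exact key U V hVne hUV huniv hnadj hx
        · refine key V U hUne hUV.symm (Set.union_comm U V ▸ huniv) ?_ hx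
          intro u hu v hv hadj
          exact hnadj v hv u hu (adjSymm hD hadj)

theorem stmt17 [Fintype X] (D : X → X → ℝ) (hD : IsMetric D) (x : X)
    (f : X → ℝ) (hfT : memT D f) (hdis : Disconn D f)
    (hcut : (∃ y, f y = 0) ∨ ¬ ∃ A B : Set X, DisjUnionTwoCliques D f A B)
    (hnotK : ∀ z : X, f ≠ fun y => D z y)
    (hnoBS : ¬ ∃ A B : Set X, IsBlockSplit D A B ∧
      (f = endpointA D A B ∨ f = endpointB D A B))
    (hrest : ¬ Disconn (fun u v : {y : X // y ≠ x} => D u.1 v.1)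
        (fun u : {y : X // y ≠ x} => f u.1) ∨
      ∃ A' B' : Set {y : X // y ≠ x},
        DisjUnionTwoCliques (fun u v : {y : X // y ≠ x} => D u.1 v.1)
          (fun u : {y : X // y ≠ x} => f u.1) A' B') :
    ∃ A : Set X, A ⊆ {y | f y ≠ 0} ∧ A.Nonempty ∧
      (∀ a ∈ A, ∀ a' ∈ A, a ≠ a' → adj D f a a') ∧
      (∀ a ∈ A, ∀ y : X, y ∉ A → ¬ adj D f a y) ∧
      0 < vdist D f A ∧
      IsBlockSplit D A Aᶜ ∧ f = endpointB D A Aᶜ := by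
  have hfP : memP D f := by
    intro u v
    have := (hfT u).2 ⟨v, rfl⟩
    simp only at this
    linarith
  have hnn : ∀ y, 0 ≤ f y := by
    intro y
    have := (hfT y).2 ⟨y, rfl⟩
    simp only at this
    rw [hD.1 y] at this; linarith
  have hsupp : ∀ y, f y ≠ 0 := by
    intro b hb0
    apply hnotK b
    funext a
    have h1 : D a b - f b ≤ f a := (hfT a).2 ⟨b, rfl⟩
    have h2 : ∀ y, D b y ≤ f y := by
      intro y
      have := (hfT b).2 ⟨y, rfl⟩
      simp only at this
      rw [hb0] at this; linarith
    obtain ⟨y₀, hy₀⟩ := (hfT a).1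
    have h3 : f a ≤ D a b := by
      have htri := hD.2.2.1 a b y₀
      have := h2 y₀
      simp only at hy₀
      linarith [hy₀.symm.le]
    have h4 : D a b ≤ f a := by rw [hb0] at h1; linarith
    rw [hD.2.1 b a]
    linarith
  have hpos : ∀ y, 0 < f y := fun y => lt_of_le_of_ne (hnn y) (Ne.symm (hsupp y))
  have hnc : ¬ ∃ A B : Set X, DisjUnionTwoCliques D f A B := by
    rcases hcut with ⟨y, hy⟩ | h
    · exact absurd hy (hsupp y)
    · exact h
  obtain ⟨A, hAne, hBne, hclq, hcross⟩ := combin D hD f x hsupp hdis hrest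
  have hpair : ∃ b ∈ Aᶜ, ∃ b' ∈ Aᶜ, f b + f b' = D b b' := by
    by_contra hno
    push_neg at hno
    apply hnc
    refine ⟨A, Aᶜ, hAne, hBne, disjoint_compl_right, ?_, hclq, ?_, ?_⟩
    · ext y
      simp only [Set.mem_union, Set.mem_compl_iff, Set.mem_setOf_eq]
      exact iff_of_true (Classical.em _) (hsupp y)
    · intro b hb b' hb' hne
      exact ⟨hne, hsupp b, hsupp b',
        (hfP b b').lt_of_ne (Ne.symm (hno b hb b' hb'))⟩
    · exact fun a ha b hb => hcross a ha b hb
  obtain ⟨hvd, hbs, hfe⟩ := analytic D hD f hfP hpos A hAne hBne hclq hcross hpair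
  exact ⟨A, fun a _ => hsupp a, hAne, hclq, hcross, hvd, hbs, hfe⟩
end

section
/- Let D be a metric on a finite set X, x ∈ X, X' := X \ {x}, and D' the restriction of D to X'. If f ∈ cut*(D) is not a Kuratowski map and there is no block split S = A|B of X with f ∈ {f_A, f_B}, then the restriction f' of f to X' satisfies: f' ∈ P(D'), Γ_{f'} is disconnected but not the disjoint union of two cliques, f' ∈ T(D'), and f(x) = max{D(x,y) − f'(y) : y ∈ X'}. -/
open Classical

variable {X : Type*}

lemma my_sInf_eq {S : Set ℝ} (hfin : S.Finite) {m : ℝ} (hm : m ∈ S)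
    (hlb : ∀ z ∈ S, m ≤ z) : sInf S = m :=
  le_antisymm (csInf_le hfin.bddBelow hm) (le_csInf ⟨m, hm⟩ hlb)

lemma kdist_eq_s18 [Fintype X] {D : X → X → ℝ} {u : X} {Y : Set X} {m : ℝ}
    (hm : ∃ y ∈ Y, ∃ y' ∈ Y, m = D u y + D u y' - D y y')
    (hlb : ∀ y ∈ Y, ∀ y' ∈ Y, m ≤ D u y + D u y' - D y y') :
    kdist D u Y = (1/2) * m := by
  have hfin : {z | ∃ y ∈ Y, ∃ y' ∈ Y, z = D u y + D u y' - D y y'}.Finite := by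
    apply Set.Finite.subset
      (Set.finite_range (fun p : X × X => D u p.1 + D u p.2 - D p.1 p.2))
    rintro z ⟨y, _, y', _, rfl⟩; exact ⟨(y, y'), rfl⟩
  have : sInf {z | ∃ y ∈ Y, ∃ y' ∈ Y, z = D u y + D u y' - D y y'} = m := by
    apply my_sInf_eq hfin hm
    rintro z ⟨y, hy, y', hy', rfl⟩; exact hlb y hy y' hy'
  rw [kdist, vdist, this]

lemma isoIdx_eq [Fintype X] {D : X → X → ℝ} {A B : Set X} {m : ℝ}
    (hm : ∃ a ∈ A, ∃ a' ∈ A, ∃ b ∈ B, ∃ b' ∈ B,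
      m = max (D a b + D a' b') (D a b' + D a' b) - D a a' - D b b')
    (hlb : ∀ a ∈ A, ∀ a' ∈ A, ∀ b ∈ B, ∀ b' ∈ B,
      m ≤ max (D a b + D a' b') (D a b' + D a' b) - D a a' - D b b') :
    isoIdx D A B = (1/2) * m := by
  have hfin : {z | ∃ a ∈ A, ∃ a' ∈ A, ∃ b ∈ B, ∃ b' ∈ B,
      z = max (D a b + D a' b') (D a b' + D a' b) - D a a' - D b b'}.Finite := by
    apply Set.Finite.subset (Set.finite_range
      (fun p : (X × X) × X × X => max (D p.1.1 p.2.1 + D p.1.2 p.2.2)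
        (D p.1.1 p.2.2 + D p.1.2 p.2.1) - D p.1.1 p.1.2 - D p.2.1 p.2.2))
    rintro z ⟨a, _, a', _, b, _, b', _, rfl⟩; exact ⟨((a, a'), (b, b')), rfl⟩
  have : sInf {z | ∃ a ∈ A, ∃ a' ∈ A, ∃ b ∈ B, ∃ b' ∈ B,
      z = max (D a b + D a' b') (D a b' + D a' b) - D a a' - D b b'} = m := by
    apply my_sInf_eq hfin hm
    rintro z ⟨a, ha, a', ha', b, hb, b', hb', rfl⟩; exact hlb a ha a' ha' b hb b' hb'
  rw [isoIdx, this]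

lemma memP_of_memT {D : X → X → ℝ} {f : X → ℝ} (hT : memT D f) : memP D f := by
  intro u v
  have h : D u v - f v ≤ f u := (hT u).2 ⟨v, rfl⟩
  linarith

lemma pos_of_memT [Fintype X] {D : X → X → ℝ} (hD : IsMetric D) {f : X → ℝ}
    (hT : memT D f) (hnotK : ∀ z : X, f ≠ fun y => D z y) (y : X) : 0 < f y := by
  obtain ⟨d0, dsymm, dtri, dpos⟩ := hD
  have hy0 : 0 ≤ f y := by
    have h : D y y - f y ≤ f y := (hT y).2 ⟨y, rfl⟩
    rw [d0] at h; linarith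
  rcases eq_or_lt_of_le hy0 with h0 | h; swap; · exact h
  exfalso
  apply hnotK y
  funext z
  have hge : D y z ≤ f z := by
    have h : D z y - f y ≤ f z := (hT z).2 ⟨y, rfl⟩
    rw [dsymm z y] at h; linarith
  have hle : f z ≤ D y z := by
    obtain ⟨w, hw⟩ := (hT z).1
    have h2 : D y w - f w ≤ f y := (hT y).2 ⟨w, rfl⟩
    have h3 : D z w ≤ D z y + D y w := dtri z y w
    have h4 : f z = D z w - f w := hw.symm
    have h5 : D z y = D y z := dsymm z y
    linarith
  exact le_antisymm hle hge

lemma adj_symm {D : X → X → ℝ} {f : X → ℝ} (dsymm : ∀ x y, D x y = D y x)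
    {u v : X} (h : adj D f u v) : adj D f v u := by
  obtain ⟨h1, h2, h3, h4⟩ := h
  exact ⟨h1.symm, h3, h2, by rw [dsymm]; linarith⟩
lemma lemA [Fintype X] {D : X → X → ℝ} (hD : IsMetric D) {f : X → ℝ}
    (hP : memP D f) (hpos : ∀ y, 0 < f y)
    (hnc : ¬ ∃ A B : Set X, DisjUnionTwoCliques D f A B)
    (hnoBS : ¬ ∃ A B : Set X, IsBlockSplit D A B ∧
      (f = endpointA D A B ∨ f = endpointB D A B))
    (w z : X) (hz : z ≠ w)
    (hconf : ∀ u, u ≠ w → D u w = f u + f w) : False := by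
  obtain ⟨d0, dsymm, dtri, dpos⟩ := hD
  set B : Set X := {y | y ≠ w} with hBdef
  have hzB : z ∈ B := hz
  have hBne : B.Nonempty := ⟨z, hz⟩
  have hwB : w ∉ B := fun h => h rfl
  have hconf' : ∀ u ∈ B, D w u = f u + f w := fun u hu => by
    rw [dsymm]; exact hconf u hu
  have hdisjwB : Disjoint ({w} : Set X) B := by
    rw [Set.disjoint_left]; rintro a rfl; exact hwB
  have hcovwB : ({w} : Set X) ∪ B = Set.univ := by
    ext u; constructor
    · intro _; trivial
    · intro _
      by_cases h : u = w
      · exact Or.inl h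
      · exact Or.inr h
  have hfinT : {t | ∃ y ∈ B, ∃ y' ∈ B, t = f y + f y' - D y y'}.Finite := by
    apply Set.Finite.subset (Set.finite_range
      (fun p : X × X => f p.1 + f p.2 - D p.1 p.2))
    rintro t ⟨y, _, y', _, rfl⟩; exact ⟨(y, y'), rfl⟩
  have hTne : {t | ∃ y ∈ B, ∃ y' ∈ B, t = f y + f y' - D y y'}.Nonempty :=
    ⟨f z + f z - D z z, z, hzB, z, hzB, rfl⟩
  set m := sInf {t | ∃ y ∈ B, ∃ y' ∈ B, t = f y + f y' - D y y'} with hm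
  obtain ⟨b₀, hb₀, b₀', hb₀', hb₀eq⟩ := hTne.csInf_mem hfinT
  have hmle : ∀ y ∈ B, ∀ y' ∈ B, m ≤ f y + f y' - D y y' := fun y hy y' hy' =>
    csInf_le hfinT.bddBelow ⟨y, hy, y', hy', rfl⟩
  have hm0 : 0 ≤ m := by rw [hm, hb₀eq]; have := hP b₀ b₀'; linarith
  have hsupp : {x | f x ≠ 0} = Set.univ := by
    ext u; simp [(hpos u).ne']
  rcases eq_or_lt_of_le hm0 with hm0' | hmpos
  · -- m = 0 : f = endpointB D {w} B, and {w}|B is a block split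
    apply hnoBS
    have hzero : f b₀ + f b₀' - D b₀ b₀' = 0 := by
      rw [← hb₀eq, ← hm, ← hm0']
    have hiso : isoIdx D ({w} : Set X) B = f w := by
      have h1 : isoIdx D ({w} : Set X) B = (1/2) * (2 * f w) := by
        apply isoIdx_eq
        · refine ⟨w, rfl, w, rfl, b₀, hb₀, b₀', hb₀', ?_⟩
          have e1 := hconf' b₀ hb₀
          have e2 := hconf' b₀' hb₀'
          have hmax : max (D w b₀ + D w b₀') (D w b₀' + D w b₀) = D w b₀ + D w b₀' :=
            max_eq_left (by linarith)
          rw [hmax, d0, e1, e2]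
          linarith
        · intro a ha a' ha' b hb b' hb'
          rw [show a = w from ha, show a' = w from ha']
          have e1 := hconf' b hb
          have e2 := hconf' b' hb'
          have hle := le_max_left (D w b + D w b') (D w b' + D w b)
          have h3 := hmle b hb b' hb'
          rw [d0]
          linarith
      rw [h1]; ring
    have hkw : kdist D w B = f w := by
      have h1 : kdist D w B = (1/2) * (2 * f w) := by
        apply kdist_eq_s18
        · refine ⟨b₀, hb₀, b₀', hb₀', ?_⟩
          rw [hconf' b₀ hb₀, hconf' b₀' hb₀']
          linarith
        · intro y hy y' hy'
          rw [hconf' y hy, hconf' y' hy']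
          have h3 := hmle y hy y' hy'
          linarith
      rw [h1]; ring
    have hku : ∀ u ∈ B, kdist D u ({w} : Set X) = D u w := by
      intro u hu
      have h1 : kdist D u ({w} : Set X) = (1/2) * (2 * D u w) := by
        apply kdist_eq_s18
        · exact ⟨w, rfl, w, rfl, by rw [d0]; ring⟩
        · intro y hy y' hy'
          rw [show y = w from hy, show y' = w from hy', d0]; linarith
      rw [h1]; ring
    have hfeq : f = endpointB D ({w} : Set X) B := by
      funext u
      by_cases huw : u = w
      · rw [huw]
        have h2 : endpointB D ({w} : Set X) B w = kdist D w B := if_pos rfl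
        rw [h2, hkw]
      · have huB : u ∈ B := huw
        have h2 : endpointB D ({w} : Set X) B u
            = kdist D u ({w} : Set X) - isoIdx D ({w} : Set X) B := if_neg huw
        rw [h2, hku u huB, hiso, hconf u huw]
        ring
    set g : X → ℝ := fun u => if u = w then f w / 2 else f u + f w / 2 with hg
    have hgw : g w = f w / 2 := by rw [hg]; simp
    have hgB : ∀ u, u ≠ w → g u = f u + f w / 2 := by
      intro u hu; rw [hg]; simp [hu]
    have hgpos : ∀ u, 0 < g u := by
      intro u
      by_cases hu : u = w
      · rw [hu, hgw]; linarith [hpos w]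
      · rw [hgB u hu]; linarith [hpos u, hpos w]
    refine ⟨{w}, B, ⟨g, ?_, fun u => ne_of_gt (hgpos u), ?_⟩, Or.inr hfeq⟩
    · -- memP
      intro u v
      by_cases hu : u = w <;> by_cases hv : v = w
      · rw [hu, hv, d0, hgw]; linarith [hpos w]
      · rw [hu, hgw, hgB v hv, hconf' v hv]
        linarith
      · rw [hv, hgB u hu, hgw, hconf u hu]
        linarith
      · rw [hgB u hu, hgB v hv]
        have := hP u v
        linarith [hpos w]
    · -- two cliques
      refine ⟨⟨w, rfl⟩, hBne, hdisjwB, ?_, ?_, ?_, ?_⟩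
      · rw [hcovwB]
        ext u
        simp only [Set.mem_univ, true_iff, Set.mem_setOf_eq]
        exact ne_of_gt (hgpos u)
      · intro a ha a' ha' hne
        exact absurd ((show a = w from ha).trans (show a' = w from ha').symm) hne
      · intro y hy y' hy' hne
        refine ⟨hne, ne_of_gt (hgpos y), ne_of_gt (hgpos y'), ?_⟩
        rw [hgB y hy, hgB y' hy']
        have := hP y y'
        linarith [hpos w]
      · intro a ha b hb hadj
        have h1 := hadj.2.2.2
        rw [show a = w from ha, hgw, hgB b hb, hconf' b hb] at h1
        linarith
  · -- m > 0 : Γ_f is the disjoint union of two cliques {w} and B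
    apply hnc
    refine ⟨{w}, B, ⟨w, rfl⟩, hBne, hdisjwB, by rw [hcovwB, hsupp], ?_, ?_, ?_⟩
    · intro a ha a' ha' hne
      exact absurd ((show a = w from ha).trans (show a' = w from ha').symm) hne
    · intro y hy y' hy' hne
      exact ⟨hne, (hpos y).ne', (hpos y').ne', by have := hmle y hy y' hy'; linarith⟩
    · rintro a rfl b hb hadj
      have h1 := hconf' b hb
      have h2 := hadj.2.2.2
      linarith
lemma lemC [Fintype X] {D : X → X → ℝ} (hD : IsMetric D) (x : X) {f : X → ℝ}
    (hP : memP D f) (hpos : ∀ y, 0 < f y)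
    (hnc : ¬ ∃ A B : Set X, DisjUnionTwoCliques D f A B)
    (hnoBS : ¬ ∃ A B : Set X, IsBlockSplit D A B ∧
      (f = endpointA D A B ∨ f = endpointB D A B))
    (A B : Set X) (hAne : A.Nonempty) (hBne : B.Nonempty)
    (hABdisj : Disjoint A B) (hxA : x ∉ A) (hxB : x ∉ B)
    (hcover : ∀ u, u ≠ x → u ∈ A ∨ u ∈ B)
    (hcliqueA : ∀ a ∈ A, ∀ a' ∈ A, a ≠ a' → D a a' < f a + f a')
    (hcliqueB : ∀ b ∈ B, ∀ b' ∈ B, b ≠ b' → D b b' < f b + f b')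
    (hcross : ∀ a ∈ A, ∀ b ∈ B, D a b = f a + f b)
    (hxBeq : ∀ b ∈ B, D x b = f x + f b) : False := by
  obtain ⟨d0, dsymm, dtri, dpos⟩ := hD
  set As : Set X := insert x A with hAs
  have hxAs : x ∈ As := Set.mem_insert x A
  have hAsub : A ⊆ As := Set.subset_insert x A
  have hBAs : ∀ b ∈ B, b ∉ As := by
    intro b hb h
    rcases Set.mem_insert_iff.1 h with h1 | h1
    · exact hxB (h1 ▸ hb)
    · exact (Set.disjoint_left.1 hABdisj h1) hb
  have hAsB : ∀ u, u ∉ As → u ∈ B := by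
    intro u hu
    have hux : u ≠ x := fun h => hu (h ▸ hxAs)
    rcases hcover u hux with h | h
    · exact absurd (hAsub h) hu
    · exact h
  have hdisjAsB : Disjoint As B := by
    rw [Set.disjoint_left]; intro a ha hb; exact hBAs a hb ha
  have hsupp : {u : X | f u ≠ 0} = Set.univ := by
    ext u; simp [(hpos u).ne']
  have hcovAsB : As ∪ B = Set.univ := by
    ext u
    refine ⟨fun _ => trivial, fun _ => ?_⟩
    by_cases h : u ∈ As
    · exact Or.inl h
    · exact Or.inr (hAsB u h)
  have hcrossS : ∀ a ∈ As, ∀ b ∈ B, D a b = f a + f b := by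
    intro a ha b hb
    rcases Set.mem_insert_iff.1 ha with h1 | h1
    · rw [h1]; exact hxBeq b hb
    · exact hcross a h1 b hb
  by_cases hall : ∀ a ∈ A, D x a < f x + f a
  · -- Γ_f is the disjoint union of cliques (insert x A) and B
    apply hnc
    refine ⟨As, B, ⟨x, hxAs⟩, hBne, hdisjAsB, by rw [hcovAsB, hsupp], ?_, ?_, ?_⟩
    · intro a ha a' ha' hne
      refine ⟨hne, (hpos a).ne', (hpos a').ne', ?_⟩
      rcases Set.mem_insert_iff.1 ha with h1 | h1 <;>
        rcases Set.mem_insert_iff.1 ha' with h2 | h2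
      · exact absurd (h1.trans h2.symm) hne
      · rw [h1]; exact hall a' h2
      · rw [h2, dsymm]; linarith [hall a h1]
      · exact hcliqueA a h1 a' h2 hne
    · intro b hb b' hb' hne
      exact ⟨hne, (hpos b).ne', (hpos b').ne', hcliqueB b hb b' hb' hne⟩
    · intro a ha b hb hadj
      have h1 := hadj.2.2.2
      rw [hcrossS a ha b hb] at h1
      linarith
  · -- some a₀ ∈ A with D x a₀ = f x + f a₀ : block split with f = endpointA
    push_neg at hall
    obtain ⟨a₀, ha₀, ha₀'⟩ := hall
    have ha₀eq : D x a₀ = f x + f a₀ := le_antisymm (hP x a₀) ha₀'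
    have ha₀As : a₀ ∈ As := hAsub ha₀
    obtain ⟨b₁, hb₁⟩ := hBne
    -- the quantity m' = 2ν
    have hfinT : {t | ∃ y ∈ B, ∃ y' ∈ B, t = f y + f y' - D y y'}.Finite := by
      apply Set.Finite.subset (Set.finite_range
        (fun p : X × X => f p.1 + f p.2 - D p.1 p.2))
      rintro t ⟨y, _, y', _, rfl⟩; exact ⟨(y, y'), rfl⟩
    have hTne : {t | ∃ y ∈ B, ∃ y' ∈ B, t = f y + f y' - D y y'}.Nonempty :=
      ⟨f b₁ + f b₁ - D b₁ b₁, b₁, hb₁, b₁, hb₁, rfl⟩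
    set m := sInf {t | ∃ y ∈ B, ∃ y' ∈ B, t = f y + f y' - D y y'} with hm
    obtain ⟨b₀, hb₀, b₀', hb₀', hb₀eq⟩ := hTne.csInf_mem hfinT
    have hmle : ∀ y ∈ B, ∀ y' ∈ B, m ≤ f y + f y' - D y y' := fun y hy y' hy' =>
      csInf_le hfinT.bddBelow ⟨y, hy, y', hy', rfl⟩
    have hmpos : 0 < m := by
      rw [hm, hb₀eq]
      by_cases h : b₀ = b₀'
      · rw [h, d0]; linarith [hpos b₀']
      · linarith [hcliqueB b₀ hb₀ b₀' hb₀' h]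
    have hmfb : ∀ b ∈ B, m ≤ 2 * f b := by
      intro b hb
      have := hmle b hb b hb
      rw [d0] at this
      linarith
    -- kdist of b to As
    have hkB : ∀ b ∈ B, kdist D b As = f b := by
      intro b hb
      have h1 : kdist D b As = (1/2) * (2 * f b) := by
        apply kdist_eq_s18
        · refine ⟨x, hxAs, a₀, ha₀As, ?_⟩
          rw [dsymm b x, dsymm b a₀, hxBeq b hb, hcross a₀ ha₀ b hb, ha₀eq]
          ring
        · intro y hy y' hy'
          rw [dsymm b y, dsymm b y', hcrossS y hy b hb, hcrossS y' hy' b hb]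
          have := hP y y'
          linarith
      rw [h1]; ring
    -- kdist of a to B
    have hkA : ∀ a ∈ As, kdist D a B = (1/2) * (2 * f a + m) := by
      intro a ha
      apply kdist_eq_s18
      · refine ⟨b₀, hb₀, b₀', hb₀', ?_⟩
        rw [hcrossS a ha b₀ hb₀, hcrossS a ha b₀' hb₀', hm, hb₀eq]
        ring
      · intro y hy y' hy'
        rw [hcrossS a ha y hy, hcrossS a ha y' hy']
        have := hmle y hy y' hy'
        linarith
    -- isolation index
    have hiso : isoIdx D As B = (1/2) * m := by
      apply isoIdx_eq
      · refine ⟨x, hxAs, a₀, ha₀As, b₀, hb₀, b₀', hb₀', ?_⟩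
        rw [hxBeq b₀ hb₀, hxBeq b₀' hb₀', hcross a₀ ha₀ b₀ hb₀, hcross a₀ ha₀ b₀' hb₀',
          ha₀eq, hm, hb₀eq]
        have hmax : max (f x + f b₀ + (f a₀ + f b₀')) (f x + f b₀' + (f a₀ + f b₀))
            = f x + f b₀ + (f a₀ + f b₀') := max_eq_left (by linarith)
        rw [hmax]
        ring
      · intro a ha a' ha' b hb b' hb'
        rw [hcrossS a ha b hb, hcrossS a' ha' b' hb']
        have hle := le_max_left (f a + f b + (f a' + f b')) (D a b' + D a' b)
        have h2 := hP a a'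
        have h3 := hmle b hb b' hb'
        linarith
    -- f is the endpoint map
    have hfeq : f = endpointA D As B := by
      funext u
      by_cases hu : u ∈ As
      · have h2 : endpointA D As B u = kdist D u B - isoIdx D As B := if_pos hu
        rw [h2, hkA u hu, hiso]
        ring
      · have huB : u ∈ B := hAsB u hu
        have h2 : endpointA D As B u = kdist D u As := if_neg hu
        rw [h2, hkB u huB]
    -- the block split witness
    set g : X → ℝ := fun u => if u ∈ As then f u + m/4 else f u - m/4 with hg
    have hgA : ∀ u ∈ As, g u = f u + m/4 := by
      intro u hu; rw [hg]; simp [hu]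
    have hgB : ∀ u, u ∉ As → g u = f u - m/4 := by
      intro u hu; rw [hg]; simp [hu]
    have hgpos : ∀ u, 0 < g u := by
      intro u
      by_cases hu : u ∈ As
      · rw [hgA u hu]; linarith [hpos u]
      · rw [hgB u hu]
        have := hmfb u (hAsB u hu)
        linarith [hpos u]
    apply hnoBS
    refine ⟨As, B, ⟨g, ?_, fun u => ne_of_gt (hgpos u), ?_⟩, Or.inl hfeq⟩
    · -- memP g
      intro u v
      by_cases hu : u ∈ As <;> by_cases hv : v ∈ As
      · rw [hgA u hu, hgA v hv]
        have := hP u v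
        linarith
      · rw [hgA u hu, hgB v hv, hcrossS u hu v (hAsB v hv)]
        linarith
      · rw [hgB u hu, hgA v hv, dsymm, hcrossS v hv u (hAsB u hu)]
        linarith
      · rw [hgB u hu, hgB v hv]
        have := hmle u (hAsB u hu) v (hAsB v hv)
        linarith
    · -- two cliques for g
      refine ⟨⟨x, hxAs⟩, ⟨b₁, hb₁⟩, hdisjAsB, ?_, ?_, ?_, ?_⟩
      · rw [hcovAsB]
        ext u
        simp only [Set.mem_univ, true_iff, Set.mem_setOf_eq]
        exact ne_of_gt (hgpos u)
      · intro a ha a' ha' hne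
        refine ⟨hne, ne_of_gt (hgpos a), ne_of_gt (hgpos a'), ?_⟩
        rw [hgA a ha, hgA a' ha']
        have := hP a a'
        linarith
      · intro b hb b' hb' hne
        refine ⟨hne, ne_of_gt (hgpos b), ne_of_gt (hgpos b'), ?_⟩
        rw [hgB b (hBAs b hb), hgB b' (hBAs b' hb')]
        have := hmle b hb b' hb'
        linarith
      · intro a ha b hb hadj
        have h1 := hadj.2.2.2
        rw [hgA a ha, hgB b (hBAs b hb), hcrossS a ha b hb] at h1
        linarith
lemma lemB [Fintype X] {D : X → X → ℝ} (hD : IsMetric D) (x : X) {f : X → ℝ}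
    (hP : memP D f) (hpos : ∀ y, 0 < f y) (hdis : Disconn D f)
    (hnc : ¬ ∃ A B : Set X, DisjUnionTwoCliques D f A B)
    (hnoBS : ¬ ∃ A B : Set X, IsBlockSplit D A B ∧
      (f = endpointA D A B ∨ f = endpointB D A B))
    (A B : Set X) (hAne : A.Nonempty) (hBne : B.Nonempty)
    (hABdisj : Disjoint A B) (hxA : x ∉ A) (hxB : x ∉ B)
    (hcover : ∀ u, u ≠ x → u ∈ A ∨ u ∈ B)
    (hcliqueA : ∀ a ∈ A, ∀ a' ∈ A, a ≠ a' → D a a' < f a + f a')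
    (hcliqueB : ∀ b ∈ B, ∀ b' ∈ B, b ≠ b' → D b b' < f b + f b')
    (hcross : ∀ a ∈ A, ∀ b ∈ B, D a b = f a + f b) : False := by
  have dsymm := hD.2.1
  have hcross' : ∀ b ∈ B, ∀ a ∈ A, D b a = f b + f a := by
    intro b hb a ha
    rw [dsymm, hcross a ha b hb]; ring
  by_cases hA : ∀ a ∈ A, D x a = f x + f a
  · exact lemC hD x hP hpos hnc hnoBS B A hBne hAne hABdisj.symm hxB hxA
      (fun u hu => (hcover u hu).symm) hcliqueB hcliqueA hcross' hA
  by_cases hB : ∀ b ∈ B, D x b = f x + f b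
  · exact lemC hD x hP hpos hnc hnoBS A B hAne hBne hABdisj hxA hxB
      hcover hcliqueA hcliqueB hcross hB
  -- x is adjacent to some point of A and some point of B : Γ_f connected, contra
  push_neg at hA hB
  obtain ⟨a, ha, haeq⟩ := hA
  obtain ⟨b, hb, hbeq⟩ := hB
  have hadjxa : adj D f x a :=
    ⟨fun h => hxA (h ▸ ha), (hpos x).ne', (hpos a).ne',
      lt_of_le_of_ne (hP x a) haeq⟩
  have hadjxb : adj D f x b :=
    ⟨fun h => hxB (h ▸ hb), (hpos x).ne', (hpos b).ne',
      lt_of_le_of_ne (hP x b) hbeq⟩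
  obtain ⟨U, V, hUne, hVne, hUV, hUVs, hnadj⟩ := hdis
  have hmem : ∀ u : X, u ∈ U ∨ u ∈ V := by
    intro u
    have : u ∈ U ∪ V := by rw [hUVs]; exact (hpos u).ne'
    exact this
  have key : ∀ (W W' : Set X), (∀ u, u ∈ W' ∨ u ∈ W) →
      (∀ u ∈ W', ∀ v ∈ W, ¬ adj D f u v) → Disjoint W' W → W.Nonempty →
      x ∈ W' → False := by
    intro W W' hmem' hn hdisj hWne hxW
    have hside : ∀ u v, adj D f u v → u ∈ W' → v ∈ W' := by
      intro u v hadj hu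
      rcases hmem' v with h | h
      · exact h
      · exact absurd hadj (hn u hu v h)
    have haW : a ∈ W' := hside x a hadjxa hxW
    have hbW : b ∈ W' := hside x b hadjxb hxW
    have hAW : ∀ a' ∈ A, a' ∈ W' := by
      intro a' ha'
      by_cases h : a' = a
      · exact h ▸ haW
      · refine hside a a' ⟨fun hh => h hh.symm, (hpos a).ne', (hpos a').ne',
          hcliqueA a ha a' ha' fun hh => h hh.symm⟩ haW
    have hBW : ∀ b' ∈ B, b' ∈ W' := by
      intro b' hb'
      by_cases h : b' = b
      · exact h ▸ hbW
      · refine hside b b' ⟨fun hh => h hh.symm, (hpos b).ne', (hpos b').ne',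
          hcliqueB b hb b' hb' fun hh => h hh.symm⟩ hbW
    obtain ⟨v, hv⟩ := hWne
    have hvW' : v ∈ W' := by
      by_cases hvx : v = x
      · exact hvx ▸ hxW
      · rcases hcover v hvx with h | h
        · exact hAW v h
        · exact hBW v h
    exact Set.disjoint_left.1 hdisj hvW' hv
  rcases hmem x with hx | hx
  · exact key V U hmem hnadj hUV hVne hx
  · refine key U V (fun u => (hmem u).symm)
      (fun u hu v hv hadj => hnadj v hv u hu (adj_symm dsymm hadj)) hUV.symm hUne hx

lemma lemD [Fintype X] {D : X → X → ℝ} (hD : IsMetric D) (x : X) {f : X → ℝ}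
    (hP : memP D f) (hpos : ∀ y, 0 < f y) (hdis : Disconn D f)
    (hnc : ¬ ∃ A B : Set X, DisjUnionTwoCliques D f A B)
    (hnoBS : ¬ ∃ A B : Set X, IsBlockSplit D A B ∧
      (f = endpointA D A B ∨ f = endpointB D A B))
    (z : X) (hzx : z ≠ x)
    (hz : ∀ u, u ≠ x → u ≠ z → adj D f z u) : False := by
  have dsymm := hD.2.1
  obtain ⟨U, V, hUne, hVne, hUV, hUVs, hnadj⟩ := hdis
  have hmem : ∀ u : X, u ∈ U ∨ u ∈ V := by
    intro u
    have : u ∈ U ∪ V := by rw [hUVs]; exact (hpos u).ne'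
    exact this
  have key : ∀ (W W' : Set X), (∀ u, u ∈ W ∨ u ∈ W') →
      (∀ u ∈ W, ∀ v ∈ W', ¬ adj D f u v) → Disjoint W W' → W'.Nonempty →
      z ∈ W → False := by
    intro W W' hmem' hn hdisj hW'ne hzW
    have hxV : ∀ v ∈ W', v = x := by
      intro v hv
      by_contra hvx
      have hvz : v ≠ z := fun h => Set.disjoint_left.1 hdisj (h ▸ hzW) hv
      exact hn z hzW v hv (hz v hvx hvz)
    obtain ⟨v, hv⟩ := hW'ne
    have hconf : ∀ u, u ≠ x → D u x = f u + f x := by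
      intro u hux
      have huW : u ∈ W := by
        rcases hmem' u with h | h
        · exact h
        · exact absurd (hxV u h) hux
      have hnadj' := hn u huW v hv
      rw [hxV v hv] at hnadj'
      by_contra hne
      exact hnadj' ⟨hux, (hpos u).ne', (hpos x).ne',
        lt_of_le_of_ne (hP u x) hne⟩
    exact lemA hD hP hpos hnc hnoBS x z hzx hconf
  rcases hmem z with hzU | hzV
  · exact key U V hmem hnadj hUV hVne hzU
  · refine key V U (fun u => (hmem u).symm)
      (fun u hu v hv hadj => hnadj v hv u hu (adj_symm dsymm hadj)) hUV.symm hUne hzV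
theorem stmt18 [Fintype X] (D : X → X → ℝ) (hD : IsMetric D) (x : X)
    (f : X → ℝ) (hfT : memT D f) (hdis : Disconn D f)
    (hcut : (∃ y, f y = 0) ∨ ¬ ∃ A B : Set X, DisjUnionTwoCliques D f A B)
    (hnotK : ∀ z : X, f ≠ fun y => D z y)
    (hnoBS : ¬ ∃ A B : Set X, IsBlockSplit D A B ∧
      (f = endpointA D A B ∨ f = endpointB D A B)) :
    memP (fun u v : {y : X // y ≠ x} => D u.1 v.1) (fun u : {y : X // y ≠ x} => f u.1) ∧
    Disconn (fun u v : {y : X // y ≠ x} => D u.1 v.1) (fun u : {y : X // y ≠ x} => f u.1) ∧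
    (¬ ∃ A' B' : Set {y : X // y ≠ x},
      DisjUnionTwoCliques (fun u v : {y : X // y ≠ x} => D u.1 v.1)
        (fun u : {y : X // y ≠ x} => f u.1) A' B') ∧
    memT (fun u v : {y : X // y ≠ x} => D u.1 v.1) (fun u : {y : X // y ≠ x} => f u.1) ∧
    IsGreatest (Set.range fun u : {y : X // y ≠ x} => D x u.1 - f u.1) (f x) := by
  obtain ⟨d0, dsymm, dtri, dpos⟩ := id hD
  have hP : memP D f := memP_of_memT hfT
  have hpos : ∀ y, 0 < f y := pos_of_memT hD hfT hnotK
  have hnc : ¬ ∃ A B : Set X, DisjUnionTwoCliques D f A B := by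
    rcases hcut with ⟨y, hy⟩ | h
    · exact absurd hy (hpos y).ne'
    · exact h
  refine ⟨fun u v => hP u.1 v.1, ?_, ?_, ?_, ?_⟩
  · -- Disconn of the restriction
    obtain ⟨U, V, hUne, hVne, hUV, hUVs, hnadj⟩ := id hdis
    have hmem : ∀ u : X, u ∈ U ∨ u ∈ V := by
      intro u
      have : u ∈ U ∪ V := by rw [hUVs]; exact (hpos u).ne'
      exact this
    by_cases hU1 : ∃ u ∈ U, u ≠ x
    · by_cases hV1 : ∃ v ∈ V, v ≠ x
      · obtain ⟨u₀, hu₀U, hu₀x⟩ := hU1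
        obtain ⟨v₀, hv₀V, hv₀x⟩ := hV1
        refine ⟨{u : {y : X // y ≠ x} | u.1 ∈ U}, {v : {y : X // y ≠ x} | v.1 ∈ V},
          ⟨⟨u₀, hu₀x⟩, hu₀U⟩, ⟨⟨v₀, hv₀x⟩, hv₀V⟩, ?_, ?_, ?_⟩
        · rw [Set.disjoint_left]
          intro a haU haV
          exact Set.disjoint_left.1 hUV haU haV
        · ext u
          simp only [Set.mem_union, Set.mem_setOf_eq]
          exact ⟨fun _ => (hpos u.1).ne', fun _ => hmem u.1⟩
        · intro u huU v hvV hadj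
          have hne : u.1 ≠ v.1 := fun h =>
            Set.disjoint_left.1 hUV huU (h ▸ hvV)
          exact hnadj u.1 huU v.1 hvV ⟨hne, hadj.2.1, hadj.2.2.1, hadj.2.2.2⟩
      · -- V ⊆ {x} : configuration, contradiction
        exfalso
        push_neg at hV1
        obtain ⟨v₀, hv₀⟩ := hVne
        have hv₀x : v₀ = x := hV1 v₀ hv₀
        obtain ⟨u₀, hu₀U, hu₀x⟩ := hU1
        apply lemA hD hP hpos hnc hnoBS x u₀ hu₀x
        intro u hux
        have huU : u ∈ U := by
          rcases hmem u with h | h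
          · exact h
          · exact absurd (hV1 u h) hux
        have hnadj' := hnadj u huU v₀ hv₀
        rw [hv₀x] at hnadj'
        by_contra hne
        exact hnadj' ⟨hux, (hpos u).ne', (hpos x).ne', lt_of_le_of_ne (hP u x) hne⟩
    · -- U ⊆ {x} : symmetric
      exfalso
      push_neg at hU1
      obtain ⟨u₀, hu₀⟩ := hUne
      have hu₀x : u₀ = x := hU1 u₀ hu₀
      obtain ⟨v₀, hv₀V⟩ := hVne
      have hv₀x : v₀ ≠ x := by
        intro h
        refine Set.disjoint_left.1 hUV ?_ hv₀V
        rw [h, ← hu₀x]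
        exact hu₀
      apply lemA hD hP hpos hnc hnoBS x v₀ hv₀x
      intro u hux
      have huV : u ∈ V := by
        rcases hmem u with h | h
        · exact absurd (hU1 u h) hux
        · exact h
      have hnadj' := hnadj u₀ hu₀ u huV
      rw [hu₀x] at hnadj'
      by_contra hne
      have hlt : D u x < f u + f x := lt_of_le_of_ne (hP u x) hne
      refine hnadj' ⟨Ne.symm hux, (hpos x).ne', (hpos u).ne', ?_⟩
      rw [dsymm]
      linarith
  · -- no two-cliques decomposition of the restriction
    rintro ⟨A', B', hA'ne, hB'ne, hdisj', hunion', hclA', hclB', hcr'⟩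
    set A : Set X := Subtype.val '' A' with hA
    set B : Set X := Subtype.val '' B' with hB
    have hxA : x ∉ A := by rintro ⟨u, _, hux⟩; exact u.2 hux
    have hxB : x ∉ B := by rintro ⟨u, _, hux⟩; exact u.2 hux
    have hABdisj : Disjoint A B := by
      rw [Set.disjoint_left]
      rintro a ⟨u, hu, rfl⟩ ⟨v, hv, hvu⟩
      have : v = u := Subtype.ext hvu
      exact Set.disjoint_left.1 hdisj' hu (this ▸ hv)
    have hcover : ∀ u, u ≠ x → u ∈ A ∨ u ∈ B := by
      intro u hux
      have : (⟨u, hux⟩ : {y : X // y ≠ x}) ∈ A' ∪ B' := by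
        rw [hunion']
        exact (hpos u).ne'
      rcases this with h | h
      · exact Or.inl ⟨⟨u, hux⟩, h, rfl⟩
      · exact Or.inr ⟨⟨u, hux⟩, h, rfl⟩
    have hcliqueA : ∀ a ∈ A, ∀ a' ∈ A, a ≠ a' → D a a' < f a + f a' := by
      rintro a ⟨u, hu, rfl⟩ a' ⟨u', hu', rfl⟩ hne
      exact (hclA' u hu u' hu' fun h => hne (congrArg Subtype.val h)).2.2.2
    have hcliqueB : ∀ b ∈ B, ∀ b' ∈ B, b ≠ b' → D b b' < f b + f b' := by
      rintro b ⟨u, hu, rfl⟩ b' ⟨u', hu', rfl⟩ hne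
      exact (hclB' u hu u' hu' fun h => hne (congrArg Subtype.val h)).2.2.2
    have hcross : ∀ a ∈ A, ∀ b ∈ B, D a b = f a + f b := by
      rintro a ⟨u, hu, rfl⟩ b ⟨v, hv, rfl⟩
      by_contra hne
      refine hcr' u hu v hv ⟨fun h => Set.disjoint_left.1 hdisj' hu (h ▸ hv),
        (hpos u.1).ne', (hpos v.1).ne', lt_of_le_of_ne (hP u.1 v.1) hne⟩
    exact lemB hD x hP hpos hdis hnc hnoBS A B (hA'ne.image _) (hB'ne.image _)
      hABdisj hxA hxB hcover hcliqueA hcliqueB hcross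
  · -- memT of the restriction
    intro z
    constructor
    · -- membership : the max is attained at some point ≠ x
      by_contra hno
      rw [Set.mem_range] at hno
      push_neg at hno
      have hstrict : ∀ u, u ≠ x → u ≠ z.1 → adj D f z.1 u := by
        intro u hux huz
        have h1 : D z.1 u - f u ≤ f z.1 := (hfT z.1).2 ⟨u, rfl⟩
        have h2 : D z.1 u - f u ≠ f z.1 := hno ⟨u, hux⟩
        exact ⟨Ne.symm huz, (hpos z.1).ne', (hpos u).ne', by
          have := lt_of_le_of_ne h1 h2
          linarith⟩
      exact lemD hD x hP hpos hdis hnc hnoBS z.1 z.2 hstrict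
    · rintro r ⟨u, rfl⟩
      exact (hfT z.1).2 ⟨u.1, rfl⟩
  · -- f x is the max of D x y - f y over y ≠ x
    constructor
    · obtain ⟨w, hw⟩ := (hfT x).1
      have hw' : D x w - f w = f x := hw
      have hwx : w ≠ x := by
        intro h
        rw [h, d0] at hw'
        linarith [hpos x]
      exact ⟨⟨w, hwx⟩, hw'⟩
    · rintro r ⟨u, rfl⟩
      exact (hfT x).2 ⟨u.1, rfl⟩
end

section
/- Let D be a metric on a finite set X and S = A|B a split of X such that D(a,b)+D(a',b') = D(a,b')+D(a',b) for all a,a' ∈ A and b,b' ∈ B. Then for every b ∈ B and all a,a' ∈ A: D(a|B) + D(a'|B) − 2α_S ≥ D(a,a'), where α_S is the isolation index of S; equivalently, D(a,b) + D(a',b) − 2D(b|A) ≥ D(a,a'). -/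
open Classical

variable {X : Type*}

lemma bddBelow_of_subset_range {α : Type*} [Fintype α] (f : α → ℝ) (S : Set ℝ)
    (h : S ⊆ Set.range f) : BddBelow S :=
  ((Set.finite_range f).subset h).bddBelow

theorem stmt19 [Fintype X] (D : X → X → ℝ) (hD : IsMetric D) (A B : Set X)
    (hS : IsSplit A B)
    (h4 : ∀ a ∈ A, ∀ a' ∈ A, ∀ b ∈ B, ∀ b' ∈ B, D a b + D a' b' = D a b' + D a' b) :
    ∀ b ∈ B, ∀ a ∈ A, ∀ a' ∈ A,
      D a a' ≤ kdist D a B + kdist D a' B - 2 * isoIdx D A B ∧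
      D a a' ≤ D a b + D a' b - 2 * kdist D b A := by
  obtain ⟨⟨a0, ha0⟩, hBne, hdisj, hcover⟩ := hS
  obtain ⟨h0, hsymm, htri, hpos⟩ := hD
  intro b hb a ha a' ha'
  -- the three sets
  set Sa : Set ℝ := {z | ∃ y ∈ B, ∃ y' ∈ B, z = D a y + D a y' - D y y'} with hSa
  set Sa' : Set ℝ := {z | ∃ y ∈ B, ∃ y' ∈ B, z = D a' y + D a' y' - D y y'} with hSa'
  set SbA : Set ℝ := {z | ∃ y ∈ A, ∃ y' ∈ A, z = D b y + D b y' - D y y'} with hSbA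
  set Sα : Set ℝ := {z | ∃ p ∈ A, ∃ q ∈ A, ∃ u ∈ B, ∃ v ∈ B,
      z = max (D p u + D q v) (D p v + D q u) - D p q - D u v} with hSα
  have bddSa : BddBelow Sa := by
    apply bddBelow_of_subset_range (fun p : X × X => D a p.1 + D a p.2 - D p.1 p.2)
    rintro z ⟨y, hy, y', hy', rfl⟩; exact ⟨(y, y'), rfl⟩
  have bddSa' : BddBelow Sa' := by
    apply bddBelow_of_subset_range (fun p : X × X => D a' p.1 + D a' p.2 - D p.1 p.2)
    rintro z ⟨y, hy, y', hy', rfl⟩; exact ⟨(y, y'), rfl⟩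
  have bddSbA : BddBelow SbA := by
    apply bddBelow_of_subset_range (fun p : X × X => D b p.1 + D b p.2 - D p.1 p.2)
    rintro z ⟨y, hy, y', hy', rfl⟩; exact ⟨(y, y'), rfl⟩
  have bddSα : BddBelow Sα := by
    apply bddBelow_of_subset_range (fun p : X × X × X × X =>
      max (D p.1 p.2.2.1 + D p.2.1 p.2.2.2) (D p.1 p.2.2.2 + D p.2.1 p.2.2.1)
        - D p.1 p.2.1 - D p.2.2.1 p.2.2.2)
    rintro z ⟨p, hp, q, hq, u, hu, v, hv, rfl⟩; exact ⟨(p, q, u, v), rfl⟩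
  have hkA : kdist D a B = (1 / 2) * sInf Sa := rfl
  have hkA' : kdist D a' B = (1 / 2) * sInf Sa' := rfl
  have hkb : kdist D b A = (1 / 2) * sInf SbA := rfl
  have hiso : isoIdx D A B = (1 / 2) * sInf Sα := rfl
  -- part (2)
  have part2 : D a a' ≤ D a b + D a' b - 2 * kdist D b A := by
    have hmem : (D b a + D b a' - D a a') ∈ SbA := ⟨a, ha, a', ha', rfl⟩
    have hle := csInf_le bddSbA hmem
    rw [hkb]
    have e1 := hsymm b a
    have e2 := hsymm b a'
    linarith
  refine ⟨?_, part2⟩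
  -- part (1)
  have key : ∀ z1 ∈ Sa, ∀ z2 ∈ Sa',
      2 * D a a' + 2 * sInf Sα ≤ z1 + z2 := by
    rintro z1 ⟨b1, hb1, b2, hb2, rfl⟩ z2 ⟨b3, hb3, b4, hb4, rfl⟩
    have m12 : (max (D a b1 + D a' b2) (D a b2 + D a' b1) - D a a' - D b1 b2) ∈ Sα :=
      ⟨a, ha, a', ha', b1, hb1, b2, hb2, rfl⟩
    have m34 : (max (D a b3 + D a' b4) (D a b4 + D a' b3) - D a a' - D b3 b4) ∈ Sα :=
      ⟨a, ha, a', ha', b3, hb3, b4, hb4, rfl⟩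
    have i12 := csInf_le bddSα m12
    have i34 := csInf_le bddSα m34
    have e12 : max (D a b1 + D a' b2) (D a b2 + D a' b1) = D a b1 + D a' b2 :=
      max_eq_left (h4 a ha a' ha' b1 hb1 b2 hb2).ge
    have e34 : max (D a b3 + D a' b4) (D a b4 + D a' b3) = D a b3 + D a' b4 :=
      max_eq_left (h4 a ha a' ha' b3 hb3 b4 hb4).ge
    rw [e12] at i12
    rw [e34] at i34
    have cross := h4 a ha a' ha' b3 hb3 b2 hb2
    linarith
  have hSane : Sa.Nonempty := ⟨D a b + D a b - D b b, b, hb, b, hb, rfl⟩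
  have hSane' : Sa'.Nonempty := ⟨D a' b + D a' b - D b b, b, hb, b, hb, rfl⟩
  have main : 2 * D a a' + 2 * sInf Sα ≤ sInf Sa + sInf Sa' := by
    have h1 : 2 * D a a' + 2 * sInf Sα - sInf Sa' ≤ sInf Sa := by
      apply le_csInf hSane
      intro z1 hz1
      have h2 : 2 * D a a' + 2 * sInf Sα - z1 ≤ sInf Sa' := by
        apply le_csInf hSane'
        intro z2 hz2
        have := key z1 hz1 z2 hz2
        linarith
      linarith
    linarith
  rw [hkA, hkA', hiso]
  linarith
end
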